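/- arXiv:1605.04301 — 5 statements merged into one kernel-verified Lean document; each statement's English description precedes it below -/
import Mathlib

section
/- Let G be a red-blue graph on n vertices containing no blue 3-cycle. Then either G_red contains a Hamiltonian cycle (a cycle through all n vertices of G) or G_blue is bipartite. -/
/-- `hasCycle G m` means the simple graph `G` contains a cycle of length `m`. -/
def hasCycle {V : Type*} (G : SimpleGraph V) (m : ℕ) : Prop :=
  ∃ (v : V) (w : G.Walk v v), w.IsCycle ∧ w.length = m

open List SimpleGraph

/-- A list representing a cycle in `G`. -/
def IsCycList {V : Type*} (G : SimpleGraph V) (l : List V) : Prop :=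
  3 ≤ l.length ∧ l.Nodup ∧ l.Chain' G.Adj ∧
    ∀ x ∈ l.getLast?, ∀ y ∈ l.head?, G.Adj x y

def mkWalk {V : Type*} (G : SimpleGraph V) :
    (x z : V) → (xs : List V) → List.Chain G.Adj x (xs ++ [z]) → G.Walk x z
  | _, _, [], h => SimpleGraph.Walk.cons (List.chain_cons.1 h).1 SimpleGraph.Walk.nil
  | _, z, a :: t, h =>
      SimpleGraph.Walk.cons (List.chain_cons.1 h).1 (mkWalk G a z t (List.chain_cons.1 h).2)

theorem mkWalk_length {V : Type*} (G : SimpleGraph V) :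
    ∀ (x z : V) (xs : List V) (h : List.Chain G.Adj x (xs ++ [z])),
      (mkWalk G x z xs h).length = xs.length + 1
  | _, _, [], _ => rfl
  | x, z, a :: t, h => by
      simp [mkWalk]
      exact mkWalk_length G a z t _

theorem mkWalk_support {V : Type*} (G : SimpleGraph V) :
    ∀ (x z : V) (xs : List V) (h : List.Chain G.Adj x (xs ++ [z])),
      (mkWalk G x z xs h).support = x :: (xs ++ [z])
  | _, _, [], _ => rfl
  | x, z, a :: t, h => by
      simp [mkWalk]
      exact mkWalk_support G a z t _

theorem chain_concat_of {V : Type*} {R : V → V → Prop} {y : V} :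
    ∀ {x : V} {xs : List V}, List.Chain R x xs →
      R ((x :: xs).getLast (List.cons_ne_nil x xs)) y → List.Chain R x (xs ++ [y])
  | x, [], _, hy => by
      exact List.chain_cons.2 ⟨by simpa using hy, List.Chain.nil⟩
  | x, a :: t, hc, hy => by
      replace hc : R x a ∧ List.Chain R a t := List.chain_cons.1 hc
      refine List.chain_cons.2 ⟨hc.1, chain_concat_of hc.2 ?_⟩
      simpa [List.getLast_cons] using hy

theorem isCycList_hasCycle {V : Type*} {G : SimpleGraph V} {l : List V}
    (h : IsCycList G l) : hasCycle G l.length := by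
  obtain ⟨hlen, hnd, hch, hcl⟩ := h
  match l, hlen, hnd, hch, hcl with
  | x :: a :: c :: t, _, hnd, hch, hcl =>
    have hchain : List.Chain G.Adj x (a :: c :: t) := hch
    have hlast : G.Adj ((x :: a :: c :: t).getLast (List.cons_ne_nil _ _)) x := by
      exact hcl _ (by simp [List.getLast?_eq_getLast]) x rfl
    have hbig : List.Chain G.Adj x ((a :: c :: t) ++ [x]) := chain_concat_of hchain hlast
    refine ⟨x, mkWalk G x x (a :: c :: t) hbig, ?_, by simp [mkWalk_length]⟩
    have heq : mkWalk G x x (a :: c :: t) hbig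
        = SimpleGraph.Walk.cons (List.chain_cons.1 hbig).1
            (mkWalk G a x (c :: t) (List.chain_cons.1 hbig).2) := rfl
    rw [heq, SimpleGraph.Walk.cons_isCycle_iff]
    have hsup : (mkWalk G a x (c :: t) (List.chain_cons.1 hbig).2).support
        = a :: ((c :: t) ++ [x]) := mkWalk_support G a x (c :: t) _
    simp only [List.nodup_cons, List.mem_cons, List.mem_append, List.mem_singleton,
      not_or] at hnd
    constructor
    · rw [SimpleGraph.Walk.isPath_def, hsup]
      have hperm : ((a :: c :: t) ++ [x]).Perm (x :: a :: c :: t) :=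
        List.perm_append_singleton _ _
      refine hperm.nodup_iff.2 ?_
      simp only [List.nodup_cons, List.mem_cons, not_or]
      tauto
    · intro hmem
      have heq2 : mkWalk G a x (c :: t) (List.chain_cons.1 hbig).2
          = SimpleGraph.Walk.cons (List.chain_cons.1 (List.chain_cons.1 hbig).2).1
              (mkWalk G c x t (List.chain_cons.1 (List.chain_cons.1 hbig).2).2) := rfl
      rw [heq2, SimpleGraph.Walk.edges_cons, List.mem_cons] at hmem
      rcases hmem with hmem | hmem
      · rw [Sym2.eq_iff] at hmem
        tauto
      · have hx : a ∈ (mkWalk G c x t _).support :=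
          SimpleGraph.Walk.fst_mem_support_of_mem_edges _ (Sym2.eq_swap ▸ hmem)
        rw [mkWalk_support G c x t (List.chain_cons.1 (List.chain_cons.1 hbig).2).2] at hx
        simp only [List.mem_cons, List.mem_append, List.mem_singleton] at hx
        have hnd2 := hnd.2.1
        tauto

theorem triangle_hasCycle {V : Type*} {G : SimpleGraph V} {a b c : V}
    (hab : G.Adj a b) (hbc : G.Adj b c) (hca : G.Adj c a) : hasCycle G 3 := by
  have h : IsCycList G [a, b, c] := by
    refine ⟨by simp, by simp [hab.ne, hbc.ne, hca.ne'], List.isChain_cons_cons.2 ⟨hab, List.isChain_cons_cons.2 ⟨hbc, .singleton _⟩⟩, by simp [hca]⟩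
  simpa using isCycList_hasCycle h

theorem IsCycList.swap {V : Type*} {G : SimpleGraph V} {l₁ l₂ : List V}
    (h : IsCycList G (l₁ ++ l₂)) : IsCycList G (l₂ ++ l₁) := by
  rcases eq_or_ne l₁ [] with rfl | h1; · simpa using h
  rcases eq_or_ne l₂ [] with rfl | h2; · simpa using h
  obtain ⟨hlen, hnd, hch, hcl⟩ := h
  replace hch := List.isChain_append.1 hch
  obtain ⟨hc1, hc2, h12⟩ := hch
  refine ⟨by simpa [Nat.add_comm] using hlen, List.nodup_append_comm.1 hnd,
    List.isChain_append.2 ⟨hc2, hc1, ?_⟩, ?_⟩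
  · intro x hx y hy
    exact hcl x (List.mem_getLast?_append_of_mem_getLast? hx)
      y (List.mem_head?_append_of_mem_head? hy)
  · intro x hx y hy
    rw [List.getLast?_append_of_ne_nil _ h1] at hx
    rw [List.head?_append_of_ne_nil _ h2] at hy
    exact h12 x hx y hy

theorem exists_first {α : Type*} (p : α → Prop) :
    ∀ (l : List α), (∃ x ∈ l, p x) →
      ∃ P a T, l = P ++ a :: T ∧ p a ∧ ∀ x ∈ P, ¬ p x := by
  classical
  intro l
  induction l with
  | nil => simp
  | cons b t ih =>
    intro hx
    by_cases hb : p b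
    · exact ⟨[], b, t, by simp, hb, by simp⟩
    · obtain ⟨x, hxl, hpx⟩ := hx
      have hxt : x ∈ t := by
        rcases List.mem_cons.1 hxl with rfl | h'
        · exact absurd hpx hb
        · exact h'
      obtain ⟨P, a, T, heq, hpa, hP⟩ := ih ⟨x, hxt, hpx⟩
      refine ⟨b :: P, a, T, by simp [heq], hpa, ?_⟩
      intro y hy
      rcases List.mem_cons.1 hy with rfl | hy'
      · exact hb
      · exact hP y hy'

theorem exists_last {α : Type*} (p : α → Prop) (l : List α) (h : ∃ x ∈ l, p x) :
    ∃ P a T, l = P ++ a :: T ∧ p a ∧ ∀ x ∈ T, ¬ p x := by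
  obtain ⟨P, a, T, heq, hpa, hP⟩ := exists_first p l.reverse (by
    obtain ⟨x, hx, hpx⟩ := h
    exact ⟨x, List.mem_reverse.2 hx, hpx⟩)
  refine ⟨T.reverse, a, P.reverse, ?_, hpa, ?_⟩
  · have := congrArg List.reverse heq
    rw [List.reverse_reverse] at this
    rw [this]
    simp
  · intro x hx
    exact hP x (List.mem_reverse.1 hx)

theorem clique_path {V : Type*} [DecidableEq V] {G : SimpleGraph V} {s : Finset V}
    (hclq : ∀ x ∈ s, ∀ y ∈ s, x ≠ y → G.Adj x y) {a b : V}
    (ha : a ∈ s) (hb : b ∈ s) (hab : a ≠ b) :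
    ∃ p : List V, p.head? = some a ∧ p.getLast? = some b ∧ p.Nodup ∧
      p.toFinset = s ∧ p.Chain' G.Adj := by
  refine ⟨a :: (((s.erase a).erase b).toList ++ [b]), rfl, ?_, ?_, ?_, ?_⟩
  · rw [← List.cons_append, List.getLast?_append_cons]
    rfl
  · simp only [List.nodup_cons, List.nodup_append, List.mem_append, List.mem_singleton,
      Finset.mem_toList, List.nodup_singleton, Finset.nodup_toList, not_or]
    refine ⟨⟨by simp, hab⟩, by trivial, by simp, ?_⟩
    intro x hx
    simp only [Finset.mem_toList, Finset.mem_erase] at hx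
    simp [hx.1]
  · ext x
    simp only [List.toFinset_cons, List.toFinset_append, List.toFinset_cons,
      List.toFinset_nil, Finset.mem_insert, Finset.mem_union, List.mem_toFinset,
      Finset.mem_toList, Finset.mem_erase, Finset.mem_singleton, insert_empty_eq,
      Finset.notMem_empty, or_false]
    constructor
    · rintro (rfl | h | rfl)
      · exact ha
      · exact h.2.2
      · exact hb
    · intro hx
      by_cases h1 : x = a
      · exact Or.inl h1
      by_cases h2 : x = b
      · simp [h2]
      · exact Or.inr (Or.inl ⟨h2, h1, hx⟩)
  · have hmem : ∀ x ∈ a :: (((s.erase a).erase b).toList ++ [b]), x ∈ s := by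
      intro x hx
      simp only [List.mem_cons, List.mem_append, List.mem_singleton, Finset.mem_toList,
        Finset.mem_erase, List.not_mem_nil, or_false] at hx
      rcases hx with rfl | h | rfl
      · exact ha
      · exact h.2.2
      · exact hb
    have hnd : (a :: (((s.erase a).erase b).toList ++ [b])).Nodup := by
      simp only [List.nodup_cons, List.nodup_append, List.mem_append, List.mem_singleton,
        Finset.mem_toList, List.nodup_singleton, Finset.nodup_toList, not_or]
      refine ⟨⟨by simp, hab⟩, by trivial, by simp, ?_⟩
      intro x hx
      simp only [Finset.mem_toList, Finset.mem_erase] at hx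
      simp [hx.1]
    refine List.Pairwise.isChain ?_
    refine (List.Pairwise.imp_of_mem ?_ hnd)
    intro x y hx hy hne
    exact hclq x (hmem x hx) y (hmem y hy) hne

theorem perm_toFinset {α : Type*} [DecidableEq α] {l₁ l₂ : List α} (h : l₁.Perm l₂) :
    l₁.toFinset = l₂.toFinset := by
  ext x
  rw [List.mem_toFinset, List.mem_toFinset, h.mem_iff]

theorem key {V : Type*} [Fintype V] [DecidableEq V] (G : SimpleGraph V)
    (hT : ∀ a b c : V, Gᶜ.Adj a b → Gᶜ.Adj b c → Gᶜ.Adj a c → False)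
    (s : Finset V) :
    (∃ l : List V, IsCycList G l ∧ l.toFinset = s) ∨
      (∃ f : V → Fin 2, ∀ a ∈ s, ∀ b ∈ s, Gᶜ.Adj a b → f a ≠ f b) := by
  classical
  have hred : ∀ a b : V, a ≠ b → ¬ Gᶜ.Adj a b → G.Adj a b := by
    intro a b hne hnb
    by_contra hg
    apply hnb
    rw [SimpleGraph.compl_adj]
    exact ⟨hne, hg⟩
  have fin2 : ∀ z : Fin 2, z = 0 ∨ z = 1 := by decide
  induction s using Finset.strongInduction with
  | _ s IH =>
  by_cases hsmall : s.card ≤ 2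
  · right
    rcases Nat.lt_or_ge s.card 2 with h2 | h2
    · refine ⟨fun _ => 0, fun a ha b hb hadj => absurd ?_ (Nat.not_lt.2 (Nat.lt_succ_iff.1 h2))⟩
      exact Finset.one_lt_card.2 ⟨a, ha, b, hb, hadj.ne⟩
    · have hcard2 : s.card = 2 := le_antisymm hsmall h2
      obtain ⟨a₀, b₀, hne, rfl⟩ := Finset.card_eq_two.1 hcard2
      refine ⟨fun x => if x = a₀ then 0 else 1, ?_⟩
      intro a ha b hb hadj
      simp only [Finset.mem_insert, Finset.mem_singleton] at ha hb
      rcases ha with rfl | rfl <;> rcases hb with rfl | rfl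
      · exact absurd rfl hadj.ne
      · simp [hne, hne.symm]
      · simp [hne, hne.symm]
      · exact absurd rfl hadj.ne
  · have h3 : 3 ≤ s.card := by omega
    obtain ⟨v, hv⟩ : ∃ v, v ∈ s := Finset.card_pos.1 (by omega)
    rcases IH (s.erase v) (Finset.erase_ssubset hv) with ⟨l, hcyc, htf⟩ | ⟨f, hf⟩
    · -- Case A : red hamiltonian cycle on s \ {v}
      have hvl : v ∉ l := fun h =>
        (Finset.mem_erase.1 (htf ▸ List.mem_toFinset.2 h)).1 rfl
      have hmem : ∀ x ∈ l, x ∈ s.erase v := fun x hx => htf ▸ List.mem_toFinset.2 hx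
      have hor : ∀ x ∈ l, G.Adj v x ∨ Gᶜ.Adj v x := by
        intro x hx
        by_cases hb : Gᶜ.Adj v x
        · exact Or.inr hb
        · exact Or.inl (hred v x (fun h => (Finset.mem_erase.1 (hmem x hx)).1 h.symm) hb)
      by_cases hR2 : ∃ a ∈ l, ∃ b ∈ l, a ≠ b ∧ G.Adj v a ∧ G.Adj v b
      · by_cases hA1 : (∃ u a b w, l = u ++ a :: b :: w ∧ G.Adj v a ∧ G.Adj v b) ∨
            (∃ x ∈ l.head?, ∃ y ∈ l.getLast?, G.Adj v x ∧ G.Adj v y)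
        · -- a consecutive red pair : insert v
          left
          rcases hA1 with ⟨u, a, b, w, heq, hra, hrb⟩ | ⟨x, hx, y, hy, hrx, hry⟩
          · have hcyc'' : IsCycList G (a :: b :: (w ++ u)) := by
              rw [heq] at hcyc
              exact hcyc.swap
            obtain ⟨hlen'', hnd'', hch'', hcl''⟩ := hcyc''
            have hpl'' : (a :: b :: (w ++ u)).Perm l := by
              rw [heq]
              exact List.perm_append_comm (l₁ := a :: b :: w) (l₂ := u)
            refine ⟨v :: ((b :: (w ++ u)) ++ [a]), ⟨?_, ?_, ?_, ?_⟩, ?_⟩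
            · have hperm : (v :: ((b :: (w ++ u)) ++ [a])).Perm (v :: (a :: b :: (w ++ u))) :=
                (List.perm_append_singleton a (b :: (w ++ u))).cons v
              rw [hperm.length_eq]
              simp only [List.length_cons] at hlen'' ⊢
              omega
            · -- nodup
              have hperm : (v :: ((b :: (w ++ u)) ++ [a])).Perm (v :: (a :: b :: (w ++ u))) :=
                (List.perm_append_singleton a (b :: (w ++ u))).cons v
              refine hperm.nodup_iff.2 ?_
              rw [List.nodup_cons]
              exact ⟨fun h => hvl (hpl''.subset h), hnd''⟩
            · -- chain
              refine List.isChain_cons.2 ?_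
              constructor
              · intro y hy
                obtain rfl : b = y := by simpa using hy
                exact hrb
              · rw [List.isChain_append]
                refine ⟨(List.isChain_cons.1 hch'').2, List.isChain_singleton a, ?_⟩
                intro x hx y hy
                obtain rfl : a = y := by simpa using hy
                refine hcl'' x ?_ a rfl
                rw [List.getLast?_cons_cons]
                exact hx
            · -- closing edge
              intro x hx y hy
              obtain rfl : v = y := by simpa using hy
              have : (v :: ((b :: (w ++ u)) ++ [a])).getLast? = some a := by
                rw [show (v :: ((b :: (w ++ u)) ++ [a]))
                    = (v :: b :: (w ++ u)) ++ [a] by simp,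
                  List.getLast?_append_cons]
                rfl
              rw [this] at hx
              obtain rfl : a = x := by simpa using hx
              exact hra.symm
            · -- toFinset
              have hperm : (v :: ((b :: (w ++ u)) ++ [a])).Perm (v :: l) :=
                ((List.perm_append_singleton a (b :: (w ++ u))).cons v).trans
                  (hpl''.cons v)
              rw [perm_toFinset hperm, List.toFinset_cons, htf, Finset.insert_erase hv]
          · -- red to both endpoints : insert v at the seam
            obtain ⟨hlen, hnd, hch, hcl⟩ := hcyc
            have hlne : l ≠ [] := by intro h; rw [h] at hlen; simp at hlen
            refine ⟨v :: l, ⟨?_, ?_, ?_, ?_⟩, ?_⟩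
            · simp only [List.length_cons]; omega
            · rw [List.nodup_cons]; exact ⟨hvl, hnd⟩
            · refine List.isChain_cons.2 ?_
              refine ⟨?_, hch⟩
              intro z hz
              have : x = z := Option.mem_unique hx hz
              rw [← this]; exact hrx
            · intro z hz y' hy'
              obtain rfl : v = y' := by simpa using hy'
              rw [show (v :: l).getLast? = l.getLast? from by
                rw [show v :: l = [v] ++ l from rfl, List.getLast?_append_of_ne_nil _ hlne]] at hz
              have : y = z := Option.mem_unique hy hz
              rw [← this]; exact hry.symm
            · rw [List.toFinset_cons, htf, Finset.insert_erase hv]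
        · -- no consecutive red pair : reroute through the blue clique
          left
          have hNmid : ∀ u a b w, l = u ++ a :: b :: w → ¬(G.Adj v a ∧ G.Adj v b) :=
            fun u a b w heq hc => hA1 (Or.inl ⟨u, a, b, w, heq, hc.1, hc.2⟩)
          have hNend : ∀ x ∈ l.head?, ∀ y ∈ l.getLast?, ¬(G.Adj v x ∧ G.Adj v y) :=
            fun x hx y hy hc => hA1 (Or.inr ⟨x, hx, y, hy, hc.1, hc.2⟩)
          obtain ⟨a, hal, b, hbl, hab, hra, hrb⟩ := hR2
          obtain ⟨P, r, T, hPT, hrr, hPnr⟩ :=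
            exists_first (fun x => G.Adj v x) l ⟨a, hal, hra⟩
          have hsec : ∃ c ∈ T, G.Adj v c := by
            have hmemput : ∀ c ∈ l, G.Adj v c → c ≠ r → c ∈ T := by
              intro c hc hrc hcr
              rw [hPT] at hc
              rcases List.mem_append.1 hc with h | h
              · exact absurd hrc (hPnr c h)
              · rcases List.mem_cons.1 h with h' | h'
                · exact absurd h' hcr
                · exact h'
            by_cases har : a = r
            · have : b ≠ r := fun h => hab (har ▸ h ▸ rfl)
              exact ⟨b, hmemput b hbl hrb this, hrb⟩
            · exact ⟨a, hmemput a hal hra har, hra⟩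
          obtain ⟨M, b', E, hTME, hrb', hEnr⟩ := exists_last (fun x => G.Adj v x) T hsec
          have hleq : l = P ++ r :: (M ++ b' :: E) := by rw [hPT, hTME]
          have hM : M ≠ [] := by
            rintro rfl
            exact hNmid P r b' E (by simpa using hleq) ⟨hrr, hrb'⟩
          set m := M.getLast hM with hmdef
          have hm' : M.dropLast ++ [m] = M := List.dropLast_append_getLast hM
          have hmnr : ¬ G.Adj v m := by
            intro hrm
            refine hNmid (P ++ r :: M.dropLast) m b' E ?_ ⟨hrm, hrb'⟩
            rw [hleq, ← hm']
            simp
          have hPE : ¬(P = [] ∧ E = []) := by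
            rintro ⟨rfl, rfl⟩
            refine hNend r ?_ b' ?_ ⟨hrr, hrb'⟩
            · rw [hleq]; rfl
            · rw [hleq]
              show ((r :: M) ++ [b']).getLast? = some b'
              rw [List.getLast?_append_cons]
              rfl
          have hcyc' : IsCycList G (r :: (M ++ b' :: (E ++ P))) := by
            have h2 : IsCycList G ((r :: (M ++ b' :: E)) ++ P) := by
              rw [hleq] at hcyc
              exact hcyc.swap
            simpa [List.append_assoc] using h2
          set E' : List V := E ++ P with hE'def
          have hE' : E' ≠ [] := fun h =>
            hPE ⟨(List.append_eq_nil_iff.1 h).2, (List.append_eq_nil_iff.1 h).1⟩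
          have hE'nr : ∀ x ∈ E', ¬ G.Adj v x := fun x hx =>
            (List.mem_append.1 hx).elim (hEnr x) (hPnr x)
          obtain ⟨hlen', hnd', hch', hcl'⟩ := hcyc'
          have hpl' : (r :: (M ++ b' :: E')).Perm l := by
            rw [hleq, hE'def]
            have := List.perm_append_comm (l₁ := P) (l₂ := r :: (M ++ b' :: E))
            simpa [List.append_assoc] using this.symm
          -- basic membership facts
          have hmm : m ∈ M := List.getLast_mem hM
          set e := E'.getLast hE' with hedef
          have hee : e ∈ E' := List.getLast_mem hE'
          have hml : m ∈ l := hpl'.subset (by simp [hmm])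
          have hel : e ∈ l := hpl'.subset (by simp [hee])
          have hmb : Gᶜ.Adj v m := (hor m hml).resolve_left hmnr
          have heb : Gᶜ.Adj v e := (hor e hel).resolve_left (hE'nr e hee)
          have hme : m ≠ e := by
            intro h
            have h1 : (M ++ b' :: E').Nodup := hnd'.of_cons
            rw [List.nodup_append] at h1
            have hmE : m ∈ b' :: E' := List.mem_cons.2 (Or.inr (by rw [h]; exact hee))
            exact h1.2.2 m hmm m hmE rfl
          have hadjme : G.Adj m e := hred m e hme (fun hb' => hT v m e hmb hb' heb)
          -- chain facts of the rotated cycle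
          have hch2 : List.Chain' G.Adj ((r :: M) ++ (b' :: E')) := hch'
          replace hch2 := List.isChain_append.1 hch2
          obtain ⟨hchrM, hchbE, hlinkMb⟩ := hch2
          -- build the new cycle
          have hpermL : (v :: ((r :: M) ++ (E'.reverse ++ [b']))).Perm (v :: l) := by
            refine List.Perm.cons v (List.Perm.trans ?_ hpl')
            refine List.Perm.append_left (r :: M) ?_
            exact (List.perm_append_singleton b' E'.reverse).trans
              ((E'.reverse_perm).cons b')
          have hrMlast : (r :: M).getLast? = some m := by
            rw [show r :: M = [r] ++ M from rfl, List.getLast?_append_of_ne_nil _ hM]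
            exact List.getLast?_eq_getLast hM
          have hE'last : E'.getLast? = some e := List.getLast?_eq_getLast hE'
          have hrevne : E'.reverse ≠ [] := fun h => hE' (List.reverse_eq_nil_iff.1 h)
          refine ⟨v :: ((r :: M) ++ (E'.reverse ++ [b'])), ⟨?_, ?_, ?_, ?_⟩, ?_⟩
          · rw [hpermL.length_eq]
            have h5 : 3 ≤ (r :: (M ++ b' :: E')).length := hlen'
            rw [hpl'.length_eq] at h5
            simp only [List.length_cons]
            omega
          · refine hpermL.nodup_iff.2 ?_
            rw [List.nodup_cons]
            exact ⟨hvl, hpl'.nodup_iff.1 hnd'⟩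
          · refine List.isChain_cons.2 ?_
            constructor
            · intro y hy
              obtain rfl : r = y := by simpa using hy
              exact hrr
            · rw [List.isChain_append]
              refine ⟨hchrM, ?_, ?_⟩
              · rw [← List.reverse_cons, List.isChain_reverse]
                exact List.IsChain.imp (fun ⦃a b⦄ h => h.symm) hchbE
              · intro x hx y hy
                rw [hrMlast] at hx
                obtain rfl : m = x := by simpa using hx
                rw [List.head?_append_of_ne_nil _ hrevne, List.head?_reverse, hE'last] at hy
                obtain rfl : e = y := by simpa using hy
                exact hadjme
          · intro x hx y hy
            obtain rfl : v = y := by simpa using hy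
            have hLlast : (v :: ((r :: M) ++ (E'.reverse ++ [b']))).getLast? = some b' := by
              rw [show v :: ((r :: M) ++ (E'.reverse ++ [b']))
                  = (v :: r :: (M ++ E'.reverse)) ++ [b'] by simp,
                List.getLast?_append_cons]
              rfl
            rw [hLlast] at hx
            obtain rfl : b' = x := by simpa using hx
            exact hrb'.symm
          · rw [perm_toFinset hpermL, List.toFinset_cons, htf, Finset.insert_erase hv]
      · -- at most one red neighbour of v : blue graph is bipartite
        right
        refine ⟨fun x => if x = v ∨ G.Adj v x then 0 else 1, ?_⟩
        intro a ha b hb hadj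
        have hne : a ≠ b := hadj.ne
        by_cases hav : a = v
        · have hbv : b ≠ v := fun h => hne (by rw [hav, h])
          have hvb : Gᶜ.Adj v b := hav ▸ hadj
          have hnrb : ¬ G.Adj v b := ((SimpleGraph.compl_adj _ _ _).1 hvb).2
          simp only [if_pos (Or.inl hav), if_neg (not_or.2 ⟨hbv, hnrb⟩)]
          decide
        · by_cases hbv : b = v
          · have hva : Gᶜ.Adj v a := hbv ▸ hadj.symm
            have hnra : ¬ G.Adj v a := ((SimpleGraph.compl_adj _ _ _).1 hva).2
            simp only [if_pos (Or.inl hbv), if_neg (not_or.2 ⟨hav, hnra⟩)]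
            decide
          · have hal : a ∈ l := by
              rw [← List.mem_toFinset, htf]
              exact Finset.mem_erase.2 ⟨hav, ha⟩
            have hbl : b ∈ l := by
              rw [← List.mem_toFinset, htf]
              exact Finset.mem_erase.2 ⟨hbv, hb⟩
            by_cases hra : G.Adj v a
            · by_cases hrb : G.Adj v b
              · exact absurd ⟨a, hal, b, hbl, hne, hra, hrb⟩ hR2
              · simp only [if_pos (Or.inr hra), if_neg (not_or.2 ⟨hbv, hrb⟩)]
                decide
            · by_cases hrb : G.Adj v b
              · simp only [if_neg (not_or.2 ⟨hav, hra⟩), if_pos (Or.inr hrb)]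
                decide
              · have hba : Gᶜ.Adj v a := (hor a hal).resolve_left hra
                have hbb : Gᶜ.Adj v b := (hor b hbl).resolve_left hrb
                exact (hT v a b hba hadj hbb).elim
    · -- Case B : 2-colouring of the blue graph on s \ {v}
      by_cases hAB : (∀ x ∈ s.erase v, f x = 1 → Gᶜ.Adj v x) ∨
          (∀ x ∈ s.erase v, f x = 0 → Gᶜ.Adj v x)
      · right
        refine ⟨fun x => if x = v then 1 else if Gᶜ.Adj v x then 0 else 1, ?_⟩
        intro a ha b hb hadj
        have hne : a ≠ b := hadj.ne
        by_cases hav : a = v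
        · have hbv : b ≠ v := fun h => hne (by rw [hav, h])
          have hvb : Gᶜ.Adj v b := hav ▸ hadj
          simp only [if_pos hav, if_neg hbv, if_pos hvb]
          decide
        · by_cases hbv : b = v
          · have hva : Gᶜ.Adj v a := hbv ▸ hadj.symm
            simp only [if_pos hbv, if_neg hav, if_pos hva]
            decide
          · have ha' : a ∈ s.erase v := Finset.mem_erase.2 ⟨hav, ha⟩
            have hb' : b ∈ s.erase v := Finset.mem_erase.2 ⟨hbv, hb⟩
            simp only [if_neg hav, if_neg hbv]
            by_cases h1 : Gᶜ.Adj v a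
            · by_cases h2 : Gᶜ.Adj v b
              · exact (hT v a b h1 hadj h2).elim
              · simp only [if_pos h1, if_neg h2]; decide
            · by_cases h2 : Gᶜ.Adj v b
              · simp only [if_neg h1, if_pos h2]; decide
              · exfalso
                have hfab := hf a ha' b hb' hadj
                rcases hAB with hA | hB
                · have ha1 : f a ≠ 1 := fun h => h1 (hA a ha' h)
                  have hb1 : f b ≠ 1 := fun h => h2 (hA b hb' h)
                  rcases fin2 (f a) with h | h <;> rcases fin2 (f b) with h' | h' <;>
                    simp_all
                · have ha1 : f a ≠ 0 := fun h => h1 (hB a ha' h)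
                  have hb1 : f b ≠ 0 := fun h => h2 (hB b hb' h)
                  rcases fin2 (f a) with h | h <;> rcases fin2 (f b) with h' | h' <;>
                    simp_all
      · by_cases hC : ∀ x ∈ s.erase v, f x = 0 → ¬ Gᶜ.Adj v x
        · right
          refine ⟨fun x => if x = v then 0 else f x, ?_⟩
          intro a ha b hb hadj
          have hne : a ≠ b := hadj.ne
          by_cases hav : a = v
          · have hbv : b ≠ v := fun h => hne (by rw [hav, h])
            have hvb : Gᶜ.Adj v b := hav ▸ hadj
            have hb' : b ∈ s.erase v := Finset.mem_erase.2 ⟨hbv, hb⟩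
            have hfb : f b ≠ 0 := fun h => hC b hb' h hvb
            simp only [if_pos hav, if_neg hbv]
            exact fun h => hfb h.symm
          · by_cases hbv : b = v
            · have hva : Gᶜ.Adj v a := hbv ▸ hadj.symm
              have ha' : a ∈ s.erase v := Finset.mem_erase.2 ⟨hav, ha⟩
              have hfa : f a ≠ 0 := fun h => hC a ha' h hva
              simp only [if_pos hbv, if_neg hav]
              exact hfa
            · have ha' : a ∈ s.erase v := Finset.mem_erase.2 ⟨hav, ha⟩
              have hb' : b ∈ s.erase v := Finset.mem_erase.2 ⟨hbv, hb⟩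
              simp only [if_neg hav, if_neg hbv]
              exact hf a ha' b hb' hadj
        · by_cases hD : ∀ x ∈ s.erase v, f x = 1 → ¬ Gᶜ.Adj v x
          · right
            refine ⟨fun x => if x = v then 1 else f x, ?_⟩
            intro a ha b hb hadj
            have hne : a ≠ b := hadj.ne
            by_cases hav : a = v
            · have hbv : b ≠ v := fun h => hne (by rw [hav, h])
              have hvb : Gᶜ.Adj v b := hav ▸ hadj
              have hb' : b ∈ s.erase v := Finset.mem_erase.2 ⟨hbv, hb⟩
              have hfb : f b ≠ 1 := fun h => hD b hb' h hvb
              simp only [if_pos hav, if_neg hbv]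
              exact fun h => hfb h.symm
            · by_cases hbv : b = v
              · have hva : Gᶜ.Adj v a := hbv ▸ hadj.symm
                have ha' : a ∈ s.erase v := Finset.mem_erase.2 ⟨hav, ha⟩
                have hfa : f a ≠ 1 := fun h => hD a ha' h hva
                simp only [if_pos hbv, if_neg hav]
                exact hfa
              · have ha' : a ∈ s.erase v := Finset.mem_erase.2 ⟨hav, ha⟩
                have hb' : b ∈ s.erase v := Finset.mem_erase.2 ⟨hbv, hb⟩
                simp only [if_neg hav, if_neg hbv]
                exact hf a ha' b hb' hadj
          · -- all four sets nonempty: build a red hamiltonian cycle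
            left
            push_neg at hAB hC hD
            obtain ⟨hnA, hnB⟩ := hAB
            obtain ⟨y₀, hy₀m, hy₀1, hy₀r⟩ := hnA
            obtain ⟨x₀, hx₀m, hx₀0, hx₀r⟩ := hnB
            obtain ⟨x₁, hx₁m, hx₁0, hx₁b⟩ := hC
            obtain ⟨y₁, hy₁m, hy₁1, hy₁b⟩ := hD
            set X : Finset V := (s.erase v).filter (fun x => f x = 0) with hXdef
            set Y : Finset V := (s.erase v).filter (fun x => f x = 1) with hYdef
            have hclqX : ∀ x ∈ X, ∀ y ∈ X, x ≠ y → G.Adj x y := by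
              intro x hx y hy hxy
              simp only [hXdef, Finset.mem_filter] at hx hy
              refine hred x y hxy (fun hb => ?_)
              have := hf x hx.1 y hy.1 hb
              rw [hx.2, hy.2] at this; exact this rfl
            have hclqY : ∀ x ∈ Y, ∀ y ∈ Y, x ≠ y → G.Adj x y := by
              intro x hx y hy hxy
              simp only [hYdef, Finset.mem_filter] at hx hy
              refine hred x y hxy (fun hb => ?_)
              have := hf x hx.1 y hy.1 hb
              rw [hx.2, hy.2] at this; exact this rfl
            have hx01 : x₀ ≠ x₁ := fun h => hx₀r (by rw [h]; exact hx₁b)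
            have hy10 : y₁ ≠ y₀ := fun h => hy₀r (by rw [← h]; exact hy₁b)
            obtain ⟨pX, hpXh, hpXl, hpXnd, hpXtf, hpXch⟩ :=
              clique_path hclqX (Finset.mem_filter.2 ⟨hx₀m, hx₀0⟩)
                (Finset.mem_filter.2 ⟨hx₁m, hx₁0⟩) hx01
            obtain ⟨pY, hpYh, hpYl, hpYnd, hpYtf, hpYch⟩ :=
              clique_path hclqY (Finset.mem_filter.2 ⟨hy₁m, hy₁1⟩)
                (Finset.mem_filter.2 ⟨hy₀m, hy₀1⟩) hy10
            have hpXne : pX ≠ [] := fun h => by rw [h] at hpXh; cases hpXh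
            have hpYne : pY ≠ [] := fun h => by rw [h] at hpYh; cases hpYh
            have hXYne : pX ++ pY ≠ [] := fun h => hpXne (List.append_eq_nil_iff.1 h).1
            have hmemX : ∀ x ∈ pX, x ∈ X := fun x hx => by
              rw [← hpXtf]; exact List.mem_toFinset.2 hx
            have hmemY : ∀ x ∈ pY, x ∈ Y := fun x hx => by
              rw [← hpYtf]; exact List.mem_toFinset.2 hx
            have hXe : ∀ x ∈ X, x ∈ s.erase v := fun x hx => (Finset.mem_filter.1 hx).1
            have hYe : ∀ x ∈ Y, x ∈ s.erase v := fun x hx => (Finset.mem_filter.1 hx).1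
            have hndL : (v :: (pX ++ pY)).Nodup := by
              rw [List.nodup_cons, List.nodup_append]
              refine ⟨?_, hpXnd, hpYnd, ?_⟩
              · intro hmem
                rcases List.mem_append.1 hmem with h | h
                · exact (Finset.mem_erase.1 (hXe _ (hmemX _ h))).1 rfl
                · exact (Finset.mem_erase.1 (hYe _ (hmemY _ h))).1 rfl
              · rintro a haX _ haY rfl
                have h0 := (Finset.mem_filter.1 (hmemX a haX)).2
                have h1 := (Finset.mem_filter.1 (hmemY a haY)).2
                rw [h0] at h1; cases h1
            have htfL : (v :: (pX ++ pY)).toFinset = s := by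
              ext x
              rw [List.toFinset_cons, List.toFinset_append, hpXtf, hpYtf]
              simp only [Finset.mem_insert, Finset.mem_union]
              constructor
              · rintro (rfl | h | h)
                · exact hv
                · exact Finset.mem_of_mem_erase (hXe _ h)
                · exact Finset.mem_of_mem_erase (hYe _ h)
              · intro hx
                by_cases hxv : x = v
                · exact Or.inl hxv
                · have hxe : x ∈ s.erase v := Finset.mem_erase.2 ⟨hxv, hx⟩
                  rcases fin2 (f x) with h | h
                  · exact Or.inr (Or.inl (Finset.mem_filter.2 ⟨hxe, h⟩))
                  · exact Or.inr (Or.inr (Finset.mem_filter.2 ⟨hxe, h⟩))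
            have hchL : List.Chain' G.Adj (v :: (pX ++ pY)) := by
              refine List.isChain_cons.2 ?_
              constructor
              · intro y hy
                rw [List.head?_append_of_ne_nil _ hpXne, hpXh] at hy
                obtain rfl : x₀ = y := by simpa using hy
                exact hred v x₀ (fun h => (Finset.mem_erase.1 hx₀m).1 h.symm) hx₀r
              · rw [List.isChain_append]
                refine ⟨hpXch, hpYch, ?_⟩
                intro x hx y hy
                rw [hpXl] at hx; rw [hpYh] at hy
                obtain rfl : x₁ = x := by simpa using hx
                obtain rfl : y₁ = y := by simpa using hy
                have hne : x₁ ≠ y₁ := fun h => by rw [h, hy₁1] at hx₁0; cases hx₁0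
                exact hred x₁ y₁ hne (fun hb => hT v x₁ y₁ hx₁b hb hy₁b)
            have hclL : ∀ x ∈ (v :: (pX ++ pY)).getLast?,
                ∀ y ∈ (v :: (pX ++ pY)).head?, G.Adj x y := by
              intro x hx y hy
              obtain rfl : v = y := by simpa using hy
              have hgl : (v :: (pX ++ pY)).getLast? = some y₀ := by
                show ([v] ++ (pX ++ pY)).getLast? = some y₀
                rw [List.getLast?_append_of_ne_nil _ hXYne,
                  List.getLast?_append_of_ne_nil _ hpYne, hpYl]
              rw [hgl] at hx
              obtain rfl : y₀ = x := by simpa using hx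
              exact (hred v y₀ (fun h => (Finset.mem_erase.1 hy₀m).1 h.symm) hy₀r).symm
            have hlenL : 3 ≤ (v :: (pX ++ pY)).length := by
              rw [← List.toFinset_card_of_nodup hndL, htfL]; exact h3
            exact ⟨v :: (pX ++ pY), ⟨hlenL, hndL, hchL, hclL⟩, htfL⟩

/-- Lemma 3.7: a red-blue graph (red subgraph `G`, blue subgraph `Gᶜ`) on `n`
vertices without blue 3-cycles is red hamiltonian or blue bipartite. -/
theorem stmt_1 {V : Type*} [Fintype V] (G : SimpleGraph V)
    (h : ¬ hasCycle Gᶜ 3) :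
    hasCycle G (Fintype.card V) ∨ Gᶜ.Colorable 2 := by
  classical
  have hT : ∀ a b c : V, Gᶜ.Adj a b → Gᶜ.Adj b c → Gᶜ.Adj a c → False := by
    intro a b c hab hbc hac
    exact h (triangle_hasCycle hab hbc hac.symm)
  rcases key G hT Finset.univ with ⟨l, hcyc, htf⟩ | ⟨f, hf⟩
  · left
    have hl : l.length = Fintype.card V := by
      rw [← List.toFinset_card_of_nodup hcyc.2.1, htf, Finset.card_univ]
    exact hl ▸ isCycList_hasCycle hcyc
  · right
    exact ⟨SimpleGraph.Coloring.mk f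
      (fun {a b} hab => hf a (Finset.mem_univ a) b (Finset.mem_univ b) hab)⟩
end

section
/- Let G be a red-blue graph and let n ≥ 6. Suppose G contains an n-cycle C = x_1 x_2 ⋯ x_n x_1 (whose edges may be of either colour) all of whose chords are red, where a chord of C is an edge x_i x_{i+j} with 2 ≤ j ≤ n − 2 (indices taken modulo n). Then the red subgraph induced on the vertex set of C is pancyclic, i.e., it contains cycles of every length from 3 to n. -/
namespace Stmt2Aux
open SimpleGraph

variable {W : Type*} (H : SimpleGraph W)

def buildWalk (f : ℕ → W) : ∀ k, (∀ i, i < k → H.Adj (f i) (f (i+1))) → H.Walk (f 0) (f k)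
  | 0, _ => Walk.nil
  | k+1, h => (buildWalk f k (fun i hi => h i (by omega))).concat (h k (by omega))

lemma buildWalk_support (f : ℕ → W) (k : ℕ) (h : ∀ i, i < k → H.Adj (f i) (f (i+1))) :
    (buildWalk H f k h).support = (List.range (k+1)).map f := by
  induction k with
  | zero => simp [buildWalk, List.range_succ]
  | succ k ih => simp [buildWalk, ih, List.range_succ]

lemma buildWalk_length (f : ℕ → W) (k : ℕ) (h : ∀ i, i < k → H.Adj (f i) (f (i+1))) :
    (buildWalk H f k h).length = k := by
  induction k with
  | zero => simp [buildWalk]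
  | succ k ih => simp [buildWalk, ih]

lemma buildWalk_edges (f : ℕ → W) (k : ℕ) (h : ∀ i, i < k → H.Adj (f i) (f (i+1))) :
    (buildWalk H f k h).edges = (List.range k).map (fun i => s(f i, f (i+1))) := by
  induction k with
  | zero => simp [buildWalk]
  | succ k ih => simp [buildWalk, ih, List.range_succ]

lemma hasCycle_of_fn (l : ℕ) (hl : 3 ≤ l) (f : ℕ → W)
    (hinj : ∀ i j, i < l → j < l → f i = f j → i = j)
    (hadj : ∀ i, i + 1 < l → H.Adj (f i) (f (i+1)))
    (hlast : H.Adj (f (l-1)) (f 0)) : hasCycle H l := by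
  have hadj' : ∀ i, i < l - 1 → H.Adj (f i) (f (i+1)) := fun i hi => hadj i (by omega)
  set p := buildWalk H f (l-1) hadj' with hp
  have hsup : p.support = (List.range l).map f := by
    have h1 : l - 1 + 1 = l := by omega
    rw [buildWalk_support, h1]
  have hnodup : p.support.Nodup := by
    rw [hsup]
    refine List.Nodup.map_on ?_ List.nodup_range
    intro i hi j hj hij
    exact hinj i j (List.mem_range.mp hi) (List.mem_range.mp hj) hij
  have hpath : p.IsPath := Walk.IsPath.mk' hnodup
  have hedge : s(f (l-1), f 0) ∉ p.edges := by
    rw [buildWalk_edges]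
    simp only [List.mem_map, List.mem_range, not_exists, not_and]
    intro i hi heq
    rw [Sym2.eq_iff] at heq
    rcases heq with ⟨h1, h2⟩ | ⟨h1, h2⟩
    · have := hinj 0 (i+1) (by omega) (by omega) h2.symm
      omega
    · have e1 := hinj 0 i (by omega) (by omega) h1.symm
      have e2 := hinj (l-1) (i+1) (by omega) (by omega) h2.symm
      omega
  refine ⟨f (l-1), Walk.cons hlast p, ?_, ?_⟩
  · rw [Walk.cons_isCycle_iff]; exact ⟨hpath, hedge⟩
  · simp [Walk.length_cons, hp, buildWalk_length]; omega

end Stmt2Aux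

/-- Lemma 3.8: if a red-blue graph (red subgraph `G`) contains an `n`-cycle
`x_1 x_2 ⋯ x_n x_1` (`n ≥ 6`, edges of either colour) all of whose chords
`x_i x_{i+j}` (`2 ≤ j ≤ n − 2`, indices mod `n`) are red, then the red subgraph
induced on the vertex set of the cycle is pancyclic. -/
theorem stmt_2 {V : Type*} [Fintype V] (G : SimpleGraph V) (n : ℕ) (hn : 6 ≤ n)
    (x : ZMod n → V) (hinj : Function.Injective x)
    (hchord : ∀ (i : ZMod n) (j : ℕ), 2 ≤ j → j ≤ n - 2 →
      G.Adj (x i) (x (i + (j : ZMod n)))) :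
    ∀ l, 3 ≤ l → l ≤ n → hasCycle (G.induce (Set.range x)) l := by
  intro l hl3 hln
  haveI : NeZero n := ⟨by omega⟩
  set F : ℕ → ↥(Set.range x) := fun m => ⟨x ((m : ℕ) : ZMod n), ⟨_, rfl⟩⟩ with hF
  have castinj : ∀ u v : ℕ, u < n → v < n → ((u : ℕ) : ZMod n) = ((v : ℕ) : ZMod n) → u = v := by
    intro u v hu hv h
    have := congrArg ZMod.val h
    rwa [ZMod.val_natCast_of_lt hu, ZMod.val_natCast_of_lt hv] at this
  have Finj : ∀ u v : ℕ, u < n → v < n → F u = F v → u = v := by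
    intro u v hu hv h
    apply castinj u v hu hv
    apply hinj
    exact congrArg Subtype.val h
  have adjF : ∀ u v j : ℕ, 2 ≤ j → j ≤ n - 2 → (u + j = v ∨ u + j = v + n) →
      (G.induce (Set.range x)).Adj (F u) (F v) := by
    intro u v j h2 hjn hd
    have h := hchord (u : ZMod n) j h2 hjn
    have hv : ((v : ℕ) : ZMod n) = (u : ZMod n) + (j : ZMod n) := by
      rcases hd with h' | h'
      · rw [← h']; push_cast; ring
      · have e : ((u + j : ℕ) : ZMod n) = ((v + n : ℕ) : ZMod n) := by rw [h']
        push_cast at e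
        simp only [ZMod.natCast_self, add_zero] at e
        rw [← e]
    show G.Adj (x ((u : ℕ) : ZMod n)) (x ((v : ℕ) : ZMod n))
    rw [hv]; exact h
  -- case l = 3
  rcases eq_or_lt_of_le hl3 with h3 | h3
  · apply Stmt2Aux.hasCycle_of_fn _ l hl3 (fun i => F (2 * i))
    · intro i j hi hj hf
      have := Finj (2*i) (2*j) (by omega) (by omega) hf
      omega
    · intro i hi
      exact adjF (2*i) (2*(i+1)) 2 le_rfl (by omega) (by omega)
    · have hl1 : l - 1 = 2 := by omega
      rw [hl1]
      exact adjF (2*2) 0 (n-4) (by omega) (by omega) (by omega)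
  rcases eq_or_lt_of_le (show 4 ≤ l from h3) with h4 | h4
  · -- l = 4 : 0 2 5 3
    have hl4 : l = 4 := by omega
    subst hl4
    set a : ℕ → ℕ := fun i => if i = 0 then 0 else if i = 1 then 2 else if i = 2 then 5 else 3 with ha
    apply Stmt2Aux.hasCycle_of_fn _ 4 (by omega) (fun i => F (a i))
    · intro i j hi hj hf
      have key := Finj (a i) (a j) (by simp only [ha]; split_ifs <;> omega)
        (by simp only [ha]; split_ifs <;> omega) hf
      simp only [ha] at key
      split_ifs at key <;> omega
    · intro i hi
      have hi3 : i < 3 := by omega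
      interval_cases i
      · exact adjF (a 0) (a 1) 2 le_rfl (by omega) (by simp only [ha]; norm_num)
      · exact adjF (a 1) (a 2) 3 (by omega) (by omega) (by simp only [ha]; norm_num)
      · exact adjF (a 2) (a 3) (n-2) (by omega) (by omega) (by simp only [ha]; norm_num; omega)
    · exact adjF (a 3) (a 0) (n-3) (by omega) (by omega) (by simp only [ha]; norm_num; omega)
  -- now 5 ≤ l
  have hl5 : 5 ≤ l := by omega
  by_cases hev : l = n ∧ n % 2 = 0
  · -- even hamiltonian case
    obtain ⟨rfl, hpar⟩ := hev
    set a : ℕ → ℕ := fun i => if i < l/2 - 1 then 2*i else if i < l-1 then 2*l - 3 - 2*i else l-2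
      with ha
    apply Stmt2Aux.hasCycle_of_fn _ l (by omega) (fun i => F (a i))
    · intro i j hi hj hf
      have key := Finj (a i) (a j) (by simp only [ha]; split_ifs <;> omega)
        (by simp only [ha]; split_ifs <;> omega) hf
      simp only [ha] at key; split_ifs at key <;> omega
    · intro i hi
      have e1 : ∀ m u : ℕ, a m = u → F (a m) = F u := by intro m u e; rw [e]
      rcases Nat.lt_or_ge (i+1) (l/2-1) with hc | hc
      · rw [e1 i (2*i) (by simp only [ha]; rw [if_pos]; omega),
          e1 (i+1) (2*i+2) (by simp only [ha]; rw [if_pos hc]; omega)]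
        exact adjF (2*i) (2*i+2) 2 le_rfl (by omega) (by omega)
      rcases Nat.lt_or_ge i (l/2-1) with hc2 | hc2
      · -- i = l/2 - 2, transition l-4 -> l-1
        rw [e1 i (l-4) (by simp only [ha]; rw [if_pos hc2]; omega),
          e1 (i+1) (l-1) (by simp only [ha]; rw [if_neg (by omega), if_pos (by omega)]; omega)]
        exact adjF (l-4) (l-1) 3 (by omega) (by omega) (by omega)
      rcases Nat.lt_or_ge (i+1) (l-1) with hc3 | hc3
      · rw [e1 i (2*l-3-2*i) (by simp only [ha]; rw [if_neg (by omega), if_pos (by omega)]),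
          e1 (i+1) (2*l-5-2*i) (by simp only [ha]; rw [if_neg (by omega), if_pos hc3]; omega)]
        exact adjF (2*l-3-2*i) (2*l-5-2*i) (l-2) (by omega) (by omega) (by omega)
      · -- i = l-2 : 1 -> l-2
        rw [e1 i 1 (by simp only [ha]; rw [if_neg (by omega), if_pos (by omega)]; omega),
          e1 (i+1) (l-2) (by simp only [ha]; rw [if_neg (by omega), if_neg (by omega)])]
        exact adjF 1 (l-2) (l-3) (by omega) (by omega) (by omega)
    · have e1 : ∀ m u : ℕ, a m = u → F (a m) = F u := by intro m u e; rw [e]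
      rw [e1 (l-1) (l-2) (by simp only [ha]; rw [if_neg (by omega), if_neg (by omega)]),
        e1 0 0 (by simp only [ha]; rw [if_pos (by omega)])]
      exact adjF (l-2) 0 2 le_rfl (by omega) (by omega)
  · -- generic case
    have hco : l ≠ n ∨ l % 2 = 1 := by omega
    set h : ℕ := (l+1)/2 with hh
    set a : ℕ → ℕ := fun i => if i < h then 2*i else 2*(i-h)+1 with ha
    apply Stmt2Aux.hasCycle_of_fn _ l (by omega) (fun i => F (a i))
    · intro i j hi hj hf
      have key := Finj (a i) (a j) (by simp only [ha]; split_ifs <;> omega)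
        (by simp only [ha]; split_ifs <;> omega) hf
      simp only [ha] at key; split_ifs at key <;> omega
    · intro i hi
      have e1 : ∀ m u : ℕ, a m = u → F (a m) = F u := by intro m u e; rw [e]
      rcases Nat.lt_or_ge (i+1) h with hc | hc
      · rw [e1 i (2*i) (by simp only [ha]; rw [if_pos (by omega)]),
          e1 (i+1) (2*i+2) (by simp only [ha]; rw [if_pos hc]; omega)]
        exact adjF (2*i) (2*i+2) 2 le_rfl (by omega) (by omega)
      rcases Nat.lt_or_ge i h with hc2 | hc2
      · -- i = h-1, transition 2h-2 -> 1
        rw [e1 i (2*h-2) (by simp only [ha]; rw [if_pos hc2]; omega),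
          e1 (i+1) 1 (by simp only [ha]; rw [if_neg (by omega)]; omega)]
        exact adjF (2*h-2) 1 (n-(2*h-3)) (by omega) (by omega) (by omega)
      · rw [e1 i (2*(i-h)+1) (by simp only [ha]; rw [if_neg (by omega)]),
          e1 (i+1) (2*(i-h)+3) (by simp only [ha]; rw [if_neg (by omega)]; omega)]
        exact adjF (2*(i-h)+1) (2*(i-h)+3) 2 le_rfl (by omega) (by omega)
    · have e1 : ∀ m u : ℕ, a m = u → F (a m) = F u := by intro m u e; rw [e]
      rw [e1 (l-1) (2*(l-1-h)+1) (by simp only [ha]; rw [if_neg (by omega)]),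
        e1 0 0 (by simp only [ha]; rw [if_pos (by omega)])]
      exact adjF (2*(l-1-h)+1) 0 (n-(2*(l-1-h)+1)) (by omega) (by omega) (by omega)
end

section
/- Let G be a red-blue graph such that G_blue contains no 5-cycle and G_red contains a cycle of length n, where n ≥ 5. Then G_red contains a cycle of length n − 1 or a cycle of length n − 2. -/
open SimpleGraph

section Aux

variable {V : Type*}

/-- Build a walk from a function `f : ℕ → V` whose consecutive values are adjacent. -/
def walkFromFn (G : SimpleGraph V) (f : ℕ → V) :
    (m : ℕ) → (∀ i < m, G.Adj (f i) (f (i+1))) → G.Walk (f 0) (f m)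
  | 0, _ => .nil
  | (m+1), h => (walkFromFn G f m (fun i hi => h i (Nat.lt_succ_of_lt hi))).concat
      (h m (Nat.lt_succ_self m))

lemma walkFromFn_length (G : SimpleGraph V) (f : ℕ → V) (m : ℕ)
    (h : ∀ i < m, G.Adj (f i) (f (i+1))) : (walkFromFn G f m h).length = m := by
  induction m with
  | zero => rfl
  | succ m ih => simp [walkFromFn, Walk.length_concat, ih]

lemma walkFromFn_support (G : SimpleGraph V) (f : ℕ → V) (m : ℕ)
    (h : ∀ i < m, G.Adj (f i) (f (i+1))) :
    (walkFromFn G f m h).support = (List.range (m+1)).map f := by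
  induction m with
  | zero => simp [walkFromFn, List.range_succ]
  | succ m ih =>
    rw [walkFromFn, Walk.support_concat, ih, List.range_succ (n := m+1)]
    simp

lemma walkFromFn_edges (G : SimpleGraph V) (f : ℕ → V) (m : ℕ)
    (h : ∀ i < m, G.Adj (f i) (f (i+1))) :
    (walkFromFn G f m h).edges = (List.range m).map (fun i => s(f i, f (i+1))) := by
  induction m with
  | zero => simp [walkFromFn]
  | succ m ih =>
    rw [walkFromFn, Walk.edges_concat, ih, List.range_succ]
    simp

end Aux

section Aux2

variable {V : Type*}

lemma hasCycle_of_fn (G : SimpleGraph V) (m : ℕ) (hm : 3 ≤ m) (f : ℕ → V)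
    (hadj : ∀ i < m, G.Adj (f i) (f (i+1))) (hend : f m = f 0)
    (hinj : Set.InjOn f (Set.Iio m)) : hasCycle G m := by
  have key : ∀ a b, a ≤ m → b ≤ m → 1 ≤ a → 1 ≤ b → f a = f b → a = b := by
    intro a b ha hb h1a h1b hf
    by_cases ham : a = m <;> by_cases hbm : b = m
    · omega
    · exfalso
      rw [ham, hend] at hf
      have := hinj (Set.mem_Iio.2 (show (0:ℕ) < m by omega))
        (Set.mem_Iio.2 (show b < m by omega)) hf
      omega
    · exfalso
      rw [hbm, hend] at hf
      have := hinj (Set.mem_Iio.2 (show a < m by omega))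
        (Set.mem_Iio.2 (show (0:ℕ) < m by omega)) hf
      omega
    · exact hinj (Set.mem_Iio.2 (by omega)) (Set.mem_Iio.2 (by omega)) hf
  have hadj' : ∀ i < m - 1, G.Adj ((fun j => f (j+1)) i) ((fun j => f (j+1)) (i+1)) :=
    fun i hi => hadj (i+1) (by omega)
  have hm1 : m - 1 + 1 = m := by omega
  let P : G.Walk (f 1) (f 0) :=
    (walkFromFn G (fun j => f (j+1)) (m-1) hadj').copy rfl (by show f (m-1+1) = f 0; rw [hm1, hend])
  have hP_support : P.support = (List.range m).map (fun j => f (j+1)) := by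
    show ((walkFromFn G (fun j => f (j+1)) (m-1) hadj').copy _ _).support = _
    rw [Walk.support_copy, walkFromFn_support, hm1]
  have hP_edges : P.edges = (List.range (m-1)).map (fun i => s(f (i+1), f (i+2))) := by
    show ((walkFromFn G (fun j => f (j+1)) (m-1) hadj').copy _ _).edges = _
    rw [Walk.edges_copy, walkFromFn_edges]
  have hadj01 : G.Adj (f 0) (f 1) := hadj 0 (by omega)
  refine ⟨f 0, Walk.cons hadj01 P, ?_, ?_⟩
  · rw [Walk.cons_isCycle_iff]
    constructor
    · apply Walk.IsPath.mk'
      rw [hP_support]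
      refine List.Nodup.map_on ?_ List.nodup_range
      intro x hx y hy hxy
      have hx' := List.mem_range.1 hx
      have hy' := List.mem_range.1 hy
      have := key (x+1) (y+1) (by omega) (by omega) (by omega) (by omega) hxy
      omega
    · rw [hP_edges]
      intro hmem
      obtain ⟨i, hi, heq⟩ := List.mem_map.1 hmem
      have hi' := List.mem_range.1 hi
      rw [Sym2.eq_iff] at heq
      rcases heq with ⟨h1, h2⟩ | ⟨h1, h2⟩
      · have := hinj (Set.mem_Iio.2 (show i+1 < m by omega))
          (Set.mem_Iio.2 (show (0:ℕ) < m by omega)) h1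
        omega
      · have h1' := hinj (Set.mem_Iio.2 (show i+1 < m by omega))
          (Set.mem_Iio.2 (show (1:ℕ) < m by omega)) h1
        have hi0 : i = 0 := by omega
        subst hi0
        have := hinj (Set.mem_Iio.2 (show (2:ℕ) < m by omega))
          (Set.mem_Iio.2 (show (0:ℕ) < m by omega)) h2
        omega
  · show P.length + 1 = m
    show ((walkFromFn G (fun j => f (j+1)) (m-1) hadj').copy _ _).length + 1 = m
    rw [Walk.length_copy, walkFromFn_length]
    omega

lemma getVert_eq_support_getElem? {G : SimpleGraph V} {u v : V} (w : G.Walk u v) (i : ℕ)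
    (hi : i ≤ w.length) : w.support[i]? = some (w.getVert i) := by
  induction w generalizing i with
  | nil =>
    simp only [Walk.length_nil, Nat.le_zero] at hi
    subst hi
    simp [Walk.getVert]
  | cons h p ih =>
    cases i with
    | zero => simp [Walk.getVert]
    | succ i =>
      simp only [Walk.support_cons, List.getElem?_cons_succ, Walk.getVert_cons_succ]
      exact ih i (by simpa [Walk.length_cons, Nat.succ_le_succ_iff] using hi)

lemma getVert_injOn_of_isCycle {G : SimpleGraph V} {v : V} {w : G.Walk v v} (hw : w.IsCycle) :
    Set.InjOn w.getVert (Set.Iio w.length) := by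
  intro i hi j hj hij
  rw [Set.mem_Iio] at hi hj
  have hnd : w.support.tail.Nodup := hw.support_nodup
  have hlen3 := hw.three_le_length
  have htl : w.support.tail.length = w.length := by
    have := w.length_support
    simp [List.length_tail, this]
  have hget : ∀ k, 1 ≤ k → k ≤ w.length → w.support.tail[k-1]? = some (w.getVert k) := by
    intro k h1 h2
    obtain ⟨k', rfl⟩ : ∃ k', k = k' + 1 := ⟨k - 1, by omega⟩
    have h3 := getVert_eq_support_getElem? w (k'+1) h2
    rw [w.support_eq_cons] at h3
    simpa using h3
  have hv0 : w.getVert 0 = w.getVert w.length := by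
    rw [w.getVert_zero, w.getVert_length]
  rcases Nat.eq_zero_or_pos i with rfl | hi1 <;> rcases Nat.eq_zero_or_pos j with rfl | hj1
  · rfl
  · exfalso
    have e1 := hget w.length (by omega) le_rfl
    have e2 := hget j hj1 (by omega)
    rw [← hv0, hij] at e1
    have := (List.getElem?_inj (by omega : w.length - 1 < w.support.tail.length) hnd).1
      (e1.trans e2.symm)
    omega
  · exfalso
    have e1 := hget w.length (by omega) le_rfl
    have e2 := hget i hi1 (by omega)
    rw [← hv0, ← hij] at e1
    have := (List.getElem?_inj (by omega : w.length - 1 < w.support.tail.length) hnd).1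
      (e1.trans e2.symm)
    omega
  · have e1 := hget i hi1 (by omega)
    have e2 := hget j hj1 (by omega)
    rw [hij] at e1
    have := (List.getElem?_inj (by omega : i - 1 < w.support.tail.length) hnd).1
      (e1.trans e2.symm)
    omega

/-- The index function for the blue 5-cycle `f 0, f 2, f 4, f 1, f 3`. -/
def blueIdx : ℕ → ℕ
  | 0 => 0
  | 1 => 2
  | 2 => 4
  | 3 => 1
  | 4 => 3
  | _ => 0

end Aux2

/-- Lemma 3.11: if the blue subgraph `Gᶜ` has no 5-cycle and the red subgraph `G`
has an `n`-cycle, `n ≥ 5`, then `G` has an `(n−1)`-cycle or an `(n−2)`-cycle. -/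
theorem stmt_3 {V : Type*} [Fintype V] (G : SimpleGraph V) (n : ℕ) (hn : 5 ≤ n)
    (h5 : ¬ hasCycle Gᶜ 5) (hcyc : hasCycle G n) :
    hasCycle G (n - 1) ∨ hasCycle G (n - 2) := by
  obtain ⟨v, w, hw, hlen⟩ := hcyc
  subst hlen
  set N := w.length with hN'
  have hN : 0 < N := by omega
  set f : ℕ → V := fun i => w.getVert (i % N) with hf
  have hfperiod : ∀ i, f (i + N) = f i := by
    intro i
    simp [hf, Nat.add_mod_right]
  have hgvinj := getVert_injOn_of_isCycle hw
  have fmod : ∀ x y, f x = f y → x % N = y % N := by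
    intro x y h
    exact hgvinj (Set.mem_Iio.2 (Nat.mod_lt _ hN)) (Set.mem_Iio.2 (Nat.mod_lt _ hN)) h
  have modcancel : ∀ x d : ℕ, d < N → x % N = (x + d) % N → d = 0 := by
    intro x d hd h
    have h' : (x + 0) % N = (x + d) % N := by simpa using h
    have h2 : (0 : ℕ) ≡ d [MOD N] := Nat.ModEq.add_left_cancel' x h'
    have h3 : d % N = 0 := by
      have := h2.symm
      unfold Nat.ModEq at this
      simpa using this
    rw [Nat.mod_eq_of_lt hd] at h3
    exact h3
  have fcancel : ∀ x y, x ≤ y → y < x + N → f x = f y → x = y := by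
    intro x y hxy hlt h
    have e : x + (y - x) = y := by omega
    have := modcancel x (y - x) (by omega) (by rw [e]; exact fmod x y h)
    omega
  have hinj5 : ∀ x y : ℕ, x < N → y < N → f x = f y → x = y := by
    intro x y hx hy h
    have := fmod x y h
    rw [Nat.mod_eq_of_lt hx, Nat.mod_eq_of_lt hy] at this
    exact this
  have hadjf : ∀ i, G.Adj (f i) (f (i+1)) := by
    intro i
    have hr : i % N < N := Nat.mod_lt _ hN
    have key : G.Adj (w.getVert (i % N)) (w.getVert (i % N + 1)) := w.adj_getVert_succ hr
    have hfival : f i = w.getVert (i % N) := rfl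
    by_cases h : i % N + 1 = N
    · have h1 : (i+1) % N = 0 := by
        rw [Nat.add_mod, Nat.mod_eq_of_lt (show 1 < N by omega)]
        rw [h]
        exact Nat.mod_self N
      have h2 : f (i+1) = v := by
        show w.getVert ((i+1) % N) = v
        rw [h1, w.getVert_zero]
      have h3 : w.getVert (i % N + 1) = v := by
        rw [h]; exact w.getVert_length
      rw [hfival, h2]
      rw [h3] at key
      exact key
    · have h1 : (i+1) % N = i % N + 1 := by
        rw [Nat.add_mod, Nat.mod_eq_of_lt (show 1 < N by omega),
          Nat.mod_eq_of_lt (show i % N + 1 < N by omega)]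
      have h2 : f (i+1) = w.getVert (i % N + 1) := by
        show w.getVert ((i+1) % N) = w.getVert (i % N + 1)
        rw [h1]
      rw [hfival, h2]
      exact key
  by_cases h2 : ∃ i, G.Adj (f i) (f (i + 2))
  · left
    obtain ⟨i, hi⟩ := h2
    refine hasCycle_of_fn G (N - 1) (by omega)
      (fun j => if j = 0 then f i else f (i + 1 + j)) ?_ ?_ ?_
    · intro j hj
      rcases Nat.eq_zero_or_pos j with rfl | hj1
      · simp only [if_pos rfl, if_neg (by omega : (0:ℕ)+1 ≠ 0)]
        have : i + 1 + (0 + 1) = i + 2 := by omega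
        rw [this]
        exact hi
      · simp only [if_neg (by omega : j ≠ 0), if_neg (by omega : j+1 ≠ 0)]
        have : i + 1 + (j + 1) = (i + 1 + j) + 1 := by omega
        rw [this]
        exact hadjf _
    · simp only [if_neg (by omega : N - 1 ≠ 0), if_pos rfl]
      have : i + 1 + (N - 1) = i + N := by omega
      rw [this]
      exact hfperiod i
    · intro a ha b hb hab
      rw [Set.mem_Iio] at ha hb
      rcases Nat.eq_zero_or_pos a with rfl | ha1 <;> rcases Nat.eq_zero_or_pos b with rfl | hb1
      · rfl
      · exfalso
        simp only [if_pos rfl, if_neg (by omega : b ≠ 0)] at hab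
        have := fcancel i (i + 1 + b) (by omega) (by omega) hab
        omega
      · exfalso
        simp only [if_pos rfl, if_neg (by omega : a ≠ 0)] at hab
        have := fcancel i (i + 1 + a) (by omega) (by omega) hab.symm
        omega
      · simp only [if_neg (by omega : a ≠ 0), if_neg (by omega : b ≠ 0)] at hab
        rcases le_total a b with h | h
        · have := fcancel (i + 1 + a) (i + 1 + b) (by omega) (by omega) hab
          omega
        · have := fcancel (i + 1 + b) (i + 1 + a) (by omega) (by omega) hab.symm
          omega
  by_cases h3 : ∃ i, G.Adj (f i) (f (i + 3))
  · right
    obtain ⟨i, hi⟩ := h3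
    refine hasCycle_of_fn G (N - 2) (by omega)
      (fun j => if j = 0 then f i else f (i + 2 + j)) ?_ ?_ ?_
    · intro j hj
      rcases Nat.eq_zero_or_pos j with rfl | hj1
      · simp only [if_pos rfl, if_neg (by omega : (0:ℕ)+1 ≠ 0)]
        have : i + 2 + (0 + 1) = i + 3 := by omega
        rw [this]
        exact hi
      · simp only [if_neg (by omega : j ≠ 0), if_neg (by omega : j+1 ≠ 0)]
        have : i + 2 + (j + 1) = (i + 2 + j) + 1 := by omega
        rw [this]
        exact hadjf _
    · simp only [if_neg (by omega : N - 2 ≠ 0), if_pos rfl]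
      have : i + 2 + (N - 2) = i + N := by omega
      rw [this]
      exact hfperiod i
    · intro a ha b hb hab
      rw [Set.mem_Iio] at ha hb
      rcases Nat.eq_zero_or_pos a with rfl | ha1 <;> rcases Nat.eq_zero_or_pos b with rfl | hb1
      · rfl
      · exfalso
        simp only [if_pos rfl, if_neg (by omega : b ≠ 0)] at hab
        have := fcancel i (i + 2 + b) (by omega) (by omega) hab
        omega
      · exfalso
        simp only [if_pos rfl, if_neg (by omega : a ≠ 0)] at hab
        have := fcancel i (i + 2 + a) (by omega) (by omega) hab.symm
        omega
      · simp only [if_neg (by omega : a ≠ 0), if_neg (by omega : b ≠ 0)] at hab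
        rcases le_total a b with h | h
        · have := fcancel (i + 2 + a) (i + 2 + b) (by omega) (by omega) hab
          omega
        · have := fcancel (i + 2 + b) (i + 2 + a) (by omega) (by omega) hab.symm
          omega
  · exfalso
    push_neg at h2 h3
    apply h5
    have hne : ∀ a d : ℕ, 1 ≤ d → d < N → f a ≠ f (a + d) := by
      intro a d h1 hd h
      have := fcancel a (a + d) (by omega) (by omega) h
      omega
    have blue2 : ∀ a, Gᶜ.Adj (f a) (f (a + 2)) := by
      intro a
      rw [SimpleGraph.compl_adj]
      exact ⟨hne a 2 (by omega) (by omega), h2 a⟩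
    have blue3 : ∀ a, Gᶜ.Adj (f a) (f (a + 3)) := by
      intro a
      rw [SimpleGraph.compl_adj]
      exact ⟨hne a 3 (by omega) (by omega), h3 a⟩
    refine hasCycle_of_fn Gᶜ 5 (by omega) (fun j => f (blueIdx j)) ?_ ?_ ?_
    · intro j hj
      interval_cases j
      · exact blue2 0
      · exact blue2 2
      · exact (blue3 1).symm
      · exact blue2 1
      · exact (blue3 0).symm
    · rfl
    · intro a ha b hb hab
      rw [Set.mem_Iio] at ha hb
      interval_cases a <;> interval_cases b <;>
        first
          | rfl
          | (simp only [blueIdx] at hab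
             have := hinj5 _ _ (by omega) (by omega) hab
             omega)
end

section
/- Let G be a red-blue graph such that G_blue contains no 5-cycle and G_red contains a cycle of length n, where 7 ≤ n ≤ |G| − 1 and |G| denotes the number of vertices of G. Then G_red contains a cycle of length n − 1. -/
set_option linter.unusedSectionVars false

open SimpleGraph

namespace RBaux

variable {V : Type*} {G : SimpleGraph V}

/-- Path through `f 0, …, f k` (built downward). -/
def buildWalk (G : SimpleGraph V) (f : ℕ → V) (h : ∀ k, G.Adj (f (k+1)) (f k)) :
    (k : ℕ) → G.Walk (f k) (f 0)
  | 0 => Walk.nil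
  | (k+1) => Walk.cons (h k) (buildWalk G f h k)

lemma buildWalk_length (f : ℕ → V) (h : ∀ k, G.Adj (f (k+1)) (f k)) (k : ℕ) :
    (buildWalk G f h k).length = k := by
  induction k with
  | zero => rfl
  | succ k ih => simp [buildWalk, ih]

lemma buildWalk_support (f : ℕ → V) (h : ∀ k, G.Adj (f (k+1)) (f k)) (k : ℕ) :
    (buildWalk G f h k).support = ((List.range (k+1)).reverse).map f := by
  induction k with
  | zero => simp [buildWalk, List.range_succ]
  | succ k ih => simp [buildWalk, ih, List.range_succ]

lemma buildWalk_edges (f : ℕ → V) (h : ∀ k, G.Adj (f (k+1)) (f k)) (k : ℕ) :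
    (buildWalk G f h k).edges = ((List.range k).reverse).map (fun j => s(f (j+1), f j)) := by
  induction k with
  | zero => simp [buildWalk]
  | succ k ih => simp [buildWalk, ih, List.range_succ]

lemma hasCycle_of_fn {m : ℕ} (hm : 3 ≤ m) (c : ZMod m → V)
    (hinj : Function.Injective c) (hadj : ∀ i, G.Adj (c i) (c (i+1))) :
    hasCycle G m := by
  haveI : NeZero m := ⟨by omega⟩
  set f : ℕ → V := fun k => c (k : ZMod m) with hf
  have hfinj : ∀ a b : ℕ, a < m → b < m → f a = f b → a = b := by
    intro a b ha hb hab
    have := hinj hab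
    have h1 : ((a : ZMod m)).val = ((b : ZMod m)).val := by rw [this]
    rwa [ZMod.val_cast_of_lt ha, ZMod.val_cast_of_lt hb] at h1
  have h : ∀ k, G.Adj (f (k+1)) (f k) := by
    intro k
    have := (hadj (k : ZMod m)).symm
    simpa [hf] using this
  have h0 : G.Adj (f 0) (f (m-1)) := by
    have := (hadj ((m-1 : ℕ) : ZMod m)).symm
    have e : ((m-1 : ℕ) : ZMod m) + 1 = 0 := by
      have : (((m-1)+1 : ℕ) : ZMod m) = 0 := by
        rw [Nat.sub_add_cancel (by omega)]; exact ZMod.natCast_self m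
      push_cast at this
      linear_combination this
    rw [e] at this
    simpa [hf] using this
  refine ⟨f 0, Walk.cons h0 (buildWalk G f h (m-1)), ?_, ?_⟩
  · rw [Walk.cons_isCycle_iff]
    constructor
    · rw [Walk.isPath_def, buildWalk_support]
      refine List.Nodup.map_on ?_ (by simp [List.nodup_range])
      intro a ha b hb hab
      simp only [List.mem_reverse, List.mem_range] at ha hb
      exact hfinj a b (by omega) (by omega) hab
    · rw [buildWalk_edges]
      intro hmem
      simp only [List.mem_map, List.mem_reverse, List.mem_range] at hmem
      obtain ⟨j, hj, hje⟩ := hmem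
      rw [Sym2.eq_iff] at hje
      rcases hje with ⟨e1, e2⟩ | ⟨e1, e2⟩
      · have := hfinj (j+1) 0 (by omega) (by omega) e1
        omega
      · have h1 := hfinj (j+1) (m-1) (by omega) (by omega) e1
        have h2 := hfinj j 0 (by omega) (by omega) e2
        omega
  · simp [Walk.length_cons, buildWalk_length]; omega


lemma support_eq_map_getVert {u v : V} (w : G.Walk u v) :
    w.support = (List.range (w.length+1)).map w.getVert := by
  induction w with
  | nil => simp [Walk.getVert]
  | cons h p ih =>
      rw [Walk.support_cons, Walk.length_cons, List.range_succ_eq_map,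
        List.map_cons, Walk.getVert_zero, List.map_map]
      congr 1

lemma fn_of_cycle {n : ℕ} (hn : 3 ≤ n) (h : hasCycle G n) :
    ∃ c : ZMod n → V, Function.Injective c ∧ ∀ i : ZMod n, G.Adj (c i) (c (i+1)) := by
  haveI : NeZero n := ⟨by omega⟩
  obtain ⟨v, w, hw, hl⟩ := h
  have hgv0 : w.getVert 0 = v := w.getVert_zero
  have hgvn : w.getVert n = v := by rw [← hl]; exact w.getVert_length
  -- tail of support is nodup
  have htail : w.support.tail = (List.range n).map (fun k => w.getVert (k+1)) := by
    rw [support_eq_map_getVert, hl, List.range_succ_eq_map]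
    simp [List.map_map, Function.comp]
  have hnodup : ((List.range n).map (fun k => w.getVert (k+1))).Nodup := by
    rw [← htail]; exact hw.2
  have h1 : ∀ a b : ℕ, a < n → b < n → w.getVert (a+1) = w.getVert (b+1) → a = b := by
    intro a b ha hb hab
    by_contra hne
    have := List.inj_on_of_nodup_map hnodup (List.mem_range.mpr ha) (List.mem_range.mpr hb) hab
    exact hne this
  have hkey : ∀ a b : ℕ, a < n → b < n → w.getVert a = w.getVert b → a = b := by
    intro a b ha hb hab
    match a, b with
    | 0, 0 => rfl
    | 0, (b+1) =>
        exfalso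
        have : w.getVert (b+1) = w.getVert ((n-1)+1) := by
          rw [Nat.sub_add_cancel (by omega), hgvn, ← hab, hgv0]
        have := h1 b (n-1) (by omega) (by omega) this
        omega
    | (a+1), 0 =>
        exfalso
        have : w.getVert (a+1) = w.getVert ((n-1)+1) := by
          rw [Nat.sub_add_cancel (by omega), hgvn, hab, hgv0]
        have := h1 a (n-1) (by omega) (by omega) this
        omega
    | (a+1), (b+1) =>
        have := h1 a b (by omega) (by omega) hab
        omega
  refine ⟨fun i => w.getVert i.val, ?_, ?_⟩
  · intro i j hij
    exact ZMod.val_injective n (hkey i.val j.val i.val_lt j.val_lt hij)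
  · intro i
    have hiv : i.val < n := i.val_lt
    have hadj := w.adj_getVert_succ (i := i.val) (by omega)
    have hval : (i+1).val = (i.val + 1) % n := by
      have : i + 1 = ((i.val + 1 : ℕ) : ZMod n) := by push_cast [ZMod.natCast_val]; ring_nf; simp
      rw [this, ZMod.val_natCast]
    by_cases hlt : i.val + 1 < n
    · have : (i+1).val = i.val + 1 := by rw [hval, Nat.mod_eq_of_lt hlt]
      beta_reduce
      rw [this]; exact hadj
    · have hn1 : i.val + 1 = n := by omega
      have : (i+1).val = 0 := by rw [hval, hn1, Nat.mod_self]
      beta_reduce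
      rw [this, hgv0]
      have h2 := hadj
      rw [hn1] at h2
      rwa [hgvn] at h2



lemma val_succ {m : ℕ} [NeZero m] (j : ZMod m) : (j+1).val = (j.val+1) % m := by
  have : j + 1 = ((j.val + 1 : ℕ) : ZMod m) := by push_cast [ZMod.natCast_val]; ring_nf; simp
  rw [this, ZMod.val_natCast]

section n
variable {n : ℕ} (hn : 7 ≤ n)
include hn

lemma cast_inj_aux [NeZero n] (c : ZMod n → V) (hinj : Function.Injective c)
    {a b : ℕ} (ha : a < n) (hb : b < n) (h : c ↑a = c ↑b) : a = b := by
  have h1 := hinj h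
  have h2 : ((a : ZMod n)).val = ((b : ZMod n)).val := by rw [h1]
  rwa [ZMod.val_cast_of_lt ha, ZMod.val_cast_of_lt hb] at h2

lemma cast_adj_aux (c : ZMod n → V) (hadj : ∀ i, G.Adj (c i) (c (i+1))) (k : ℕ) :
    G.Adj (c ↑k) (c ↑(k+1)) := by
  have := hadj (k : ZMod n)
  push_cast
  exact this

lemma skip_lemma (c : ZMod n → V)
    (hinj : Function.Injective c) (hadj : ∀ i, G.Adj (c i) (c (i+1)))
    (h02 : G.Adj (c 0) (c 2)) : hasCycle G (n-1) := by
  haveI : NeZero n := ⟨by omega⟩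
  haveI : NeZero (n-1) := ⟨by omega⟩
  have hcinj : ∀ a b : ℕ, a < n → b < n → c ↑a = c ↑b → a = b :=
    fun a b ha hb h => cast_inj_aux hn c hinj ha hb h
  have hcadj := cast_adj_aux hn c hadj
  refine hasCycle_of_fn (by omega) (fun j : ZMod (n-1) => if j.val = 0 then c 0 else c ↑(j.val + 1)) ?_ ?_
  · intro j₁ j₂ h
    have v1 := j₁.val_lt
    have v2 := j₂.val_lt
    simp only [] at h
    split_ifs at h with e1 e2 e2
    · exact ZMod.val_injective _ (by rw [e1, e2])
    · exfalso
      have : c ↑(0:ℕ) = c ↑(j₂.val + 1) := by rwa [Nat.cast_zero]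
      have := hcinj _ _ (by omega) (by omega) this
      omega
    · exfalso
      have : c ↑(0:ℕ) = c ↑(j₁.val + 1) := by rw [Nat.cast_zero]; exact h.symm
      have := hcinj _ _ (by omega) (by omega) this
      omega
    · have := hcinj _ _ (by omega) (by omega) h
      exact ZMod.val_injective _ (by omega)
  · intro j
    have hv := j.val_lt
    have hj1 := val_succ j
    have hmod : (j.val+1) % (n-1) = if j.val + 1 = n-1 then 0 else j.val+1 := by
      split
      · rename_i hh; rw [hh, Nat.mod_self]
      · exact Nat.mod_eq_of_lt (by omega)
    beta_reduce
    split_ifs with h0 h1 h1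
    · exfalso; rw [hj1, hmod] at h1; split_ifs at h1 <;> omega
    · rw [hj1, hmod, if_neg (by omega : ¬ (j.val + 1 = n - 1)), h0]
      have e2 : ((0+1+1 : ℕ) : ZMod n) = 2 := by norm_num
      rw [e2]
      exact h02
    · have hjv : j.val + 1 = n - 1 := by
        by_contra hc
        rw [hj1, hmod, if_neg hc] at h1
        omega
      rw [hjv]
      have := hcadj (n-1)
      rw [show (n-1)+1 = n by omega, ZMod.natCast_self] at this
      exact this
    · have hne' : j.val + 1 ≠ n - 1 := by
        intro hc
        exact h1 (by rw [hj1, hmod, if_pos hc])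
      rw [hj1, hmod, if_neg hne']
      exact hcadj (j.val + 1)

lemma replace_lemma (c : ZMod n → V)
    (hinj : Function.Injective c) (hadj : ∀ i, G.Adj (c i) (c (i+1)))
    (u : V) (hu : ∀ i, c i ≠ u)
    (h0 : G.Adj u (c 0)) (h3 : G.Adj u (c 3)) : hasCycle G (n-1) := by
  haveI : NeZero n := ⟨by omega⟩
  haveI : NeZero (n-1) := ⟨by omega⟩
  have hcinj : ∀ a b : ℕ, a < n → b < n → c ↑a = c ↑b → a = b :=
    fun a b ha hb h => cast_inj_aux hn c hinj ha hb h
  have hcadj := cast_adj_aux hn c hadj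
  refine hasCycle_of_fn (by omega) (fun j : ZMod (n-1) => if j.val = 0 then u else c ↑(j.val + 2)) ?_ ?_
  · intro j₁ j₂ h
    have v1 := j₁.val_lt
    have v2 := j₂.val_lt
    simp only [] at h
    split_ifs at h with e1 e2 e2
    · exact ZMod.val_injective _ (by rw [e1, e2])
    · exact absurd h.symm (hu _)
    · exact absurd h (hu _)
    · -- c ↑(j₁.val+2) = c ↑(j₂.val+2), vals in [1, n-2]
      have h1 := hinj h
      have h2 : (((j₁.val + 2 : ℕ) : ZMod n)).val = (((j₂.val + 2 : ℕ) : ZMod n)).val := by rw [h1]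
      rw [ZMod.val_natCast, ZMod.val_natCast] at h2
      have hm : ∀ x : ℕ, x ≤ n → x % n = if x = n then 0 else x := by
        intro x hx
        split
        · rename_i hh; rw [hh, Nat.mod_self]
        · exact Nat.mod_eq_of_lt (by omega)
      rw [hm _ (by omega), hm _ (by omega)] at h2
      apply ZMod.val_injective
      split_ifs at h2 <;> omega
  · intro j
    have hv := j.val_lt
    have hj1 := val_succ j
    have hmod : (j.val+1) % (n-1) = if j.val + 1 = n-1 then 0 else j.val+1 := by
      split
      · rename_i hh; rw [hh, Nat.mod_self]
      · exact Nat.mod_eq_of_lt (by omega)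
    beta_reduce
    split_ifs with h0' h1 h1
    · exfalso; rw [hj1, hmod] at h1; split_ifs at h1 <;> omega
    · rw [hj1, hmod, if_neg (by omega : ¬ (j.val + 1 = n - 1)), h0']
      have e2 : ((0+1+2 : ℕ) : ZMod n) = 3 := by norm_num
      rw [e2]
      exact h3
    · have hjv : j.val + 1 = n - 1 := by
        by_contra hc
        rw [hj1, hmod, if_neg hc] at h1
        omega
      rw [show j.val + 2 = n by omega, ZMod.natCast_self]
      exact h0.symm
    · have hne' : j.val + 1 ≠ n - 1 := by
        intro hc
        exact h1 (by rw [hj1, hmod, if_pos hc])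
      rw [hj1, hmod, if_neg hne']
      have := hcadj (j.val + 2)
      rw [show j.val + 2 + 1 = j.val + 1 + 2 by omega] at this
      exact this

lemma blue5 (c : ZMod n → V) (hinj : Function.Injective c)
    (u : V) (hu : ∀ i, c i ≠ u)
    (hA : ∀ i, ¬ G.Adj (c i) (c (i+2)))
    (a : ZMod n) (hb1 : ¬ G.Adj u (c a)) (hb2 : ¬ G.Adj u (c (a+6))) :
    hasCycle Gᶜ 5 := by
  haveI : NeZero n := ⟨by omega⟩
  have hne : ∀ x y : ℕ, x < n → y < n → x ≠ y → c (a + ↑x) ≠ c (a + ↑y) := by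
    intro x y hx hy hxy h
    have := hinj h
    have h2 : a + ↑x - a = a + ↑y - a := by rw [this]
    simp only [add_sub_cancel_left] at h2
    have h3 : ((x : ZMod n)).val = ((y : ZMod n)).val := by rw [h2]
    rw [ZMod.val_cast_of_lt hx, ZMod.val_cast_of_lt hy] at h3
    exact hxy h3
  refine hasCycle_of_fn (by omega) (fun j : ZMod 5 => if j.val = 0 then u else c (a + ↑(2*(j.val-1)))) ?_ ?_
  · intro j₁ j₂ h
    have v1 := j₁.val_lt
    have v2 := j₂.val_lt
    simp only [] at h
    split_ifs at h with e1 e2 e2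
    · exact ZMod.val_injective _ (by rw [e1, e2])
    · exact absurd h.symm (hu _)
    · exact absurd h (hu _)
    · apply ZMod.val_injective
      by_contra hvv
      exact hne (2*(j₁.val-1)) (2*(j₂.val-1)) (by omega) (by omega) (by omega) h
  · intro j
    have hv := j.val_lt
    have hj1 := val_succ j
    have hca : a + ↑(2*(1-1) : ℕ) = a := by norm_num
    have hc2 : a + ↑(2*(2-1) : ℕ) = a + 2 := by norm_num
    have hc4 : a + ↑(2*(3-1) : ℕ) = a + 4 := by norm_num
    have hc6 : a + ↑(2*(4-1) : ℕ) = a + 6 := by norm_num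
    beta_reduce
    rw [SimpleGraph.compl_adj]
    have hcase : j.val = 0 ∨ j.val = 1 ∨ j.val = 2 ∨ j.val = 3 ∨ j.val = 4 := by omega
    rcases hcase with h | h | h | h | h
    · have hq : (j+1).val = 1 := by rw [hj1, h]
      rw [h, hq]
      norm_num
      exact ⟨Ne.symm (hu a), hb1⟩
    · have hq : (j+1).val = 2 := by rw [hj1, h]
      rw [h, hq]
      norm_num
      refine ⟨by simpa using hne 0 2 (by omega) (by omega) (by omega), hA a⟩
    · have hq : (j+1).val = 3 := by rw [hj1, h]
      rw [h, hq]
      norm_num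
      refine ⟨by simpa using hne 2 4 (by omega) (by omega) (by omega), ?_⟩
      have := hA (a+2)
      rw [add_assoc] at this
      norm_num at this
      exact this
    · have hq : (j+1).val = 4 := by rw [hj1, h]
      rw [h, hq]
      norm_num
      refine ⟨by simpa using hne 4 6 (by omega) (by omega) (by omega), ?_⟩
      have := hA (a+4)
      rw [add_assoc] at this
      norm_num at this
      exact this
    · have hq : (j+1).val = 0 := by rw [hj1, h]
      rw [h, hq]
      norm_num
      exact ⟨hu _, fun hh => hb2 hh.symm⟩

end n

end RBaux

/-- Lemma 3.12: if the blue subgraph `Gᶜ` has no 5-cycle and the red subgraph `G`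
has an `n`-cycle, where `7 ≤ n ≤ |G| − 1`, then `G` has an `(n−1)`-cycle. -/
theorem stmt_4 {V : Type*} [Fintype V] (G : SimpleGraph V) (n : ℕ)
    (hn : 7 ≤ n) (hn' : n ≤ Fintype.card V - 1)
    (h5 : ¬ hasCycle Gᶜ 5) (hcyc : hasCycle G n) :
    hasCycle G (n - 1) := by
  haveI : NeZero n := ⟨by omega⟩
  obtain ⟨c, hinj, hadj⟩ := RBaux.fn_of_cycle (by omega) hcyc
  have hcard : n + 1 ≤ Fintype.card V := by omega
  have hex : ∃ u : V, ∀ i, c i ≠ u := by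
    by_contra hco
    push_neg at hco
    have hsurj : Function.Surjective c := fun u => by
      obtain ⟨i, hi⟩ := hco u; exact ⟨i, hi⟩
    have := Fintype.card_le_of_surjective c hsurj
    rw [ZMod.card] at this
    omega
  obtain ⟨u, hu⟩ := hex
  by_contra hno
  have hA : ∀ i, ¬ G.Adj (c i) (c (i+2)) := by
    intro i hi
    apply hno
    refine RBaux.skip_lemma hn (fun j => c (j + i)) (hinj.comp (add_left_injective i))
      (fun j => ?_) ?_
    · have := hadj (j + i)
      beta_reduce
      rw [show j + 1 + i = j + i + 1 by ring]
      exact this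
    · beta_reduce
      rw [zero_add, add_comm 2 i]
      exact hi
  have hB : ∀ i, G.Adj u (c i) → G.Adj u (c (i+3)) → False := by
    intro i hi hi3
    apply hno
    refine RBaux.replace_lemma hn (fun j => c (j + i)) (hinj.comp (add_left_injective i))
      (fun j => ?_) u (fun j => hu (j + i)) ?_ ?_
    · have := hadj (j + i)
      beta_reduce
      rw [show j + 1 + i = j + i + 1 by ring]
      exact this
    · beta_reduce; rw [zero_add]; exact hi
    · beta_reduce; rw [add_comm 3 i]; exact hi3
  have key : ∃ a : ZMod n, ¬ G.Adj u (c a) ∧ ¬ G.Adj u (c (a+6)) := by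
    by_cases k0 : G.Adj u (c 0)
    · have b3 : ¬ G.Adj u (c 3) := fun h => hB 0 k0 (by rwa [zero_add])
      by_cases k9 : G.Adj u (c 9)
      · have b6 : ¬ G.Adj u (c 6) := fun h => hB 6 h (by rwa [show (6:ZMod n)+3 = 9 by norm_num])
        have b12 : ¬ G.Adj u (c 12) := fun h =>
          hB 9 k9 (by rwa [show (9:ZMod n)+3 = 12 by norm_num])
        exact ⟨6, b6, by rwa [show (6:ZMod n)+6 = 12 by norm_num]⟩
      · exact ⟨3, b3, by rwa [show (3:ZMod n)+6 = 9 by norm_num]⟩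
    · by_cases k6 : G.Adj u (c 6)
      · have b9 : ¬ G.Adj u (c 9) := fun h => hB 6 k6 (by rwa [show (6:ZMod n)+3 = 9 by norm_num])
        have b3 : ¬ G.Adj u (c 3) := fun h =>
          hB 3 h (by rw [show (3:ZMod n)+3 = 6 by norm_num]; exact k6)
        exact ⟨3, b3, by rwa [show (3:ZMod n)+6 = 9 by norm_num]⟩
      · exact ⟨0, k0, by rwa [zero_add]⟩
  obtain ⟨a, hb1, hb2⟩ := key
  exact h5 (RBaux.blue5 hn c hinj u hu hA a hb1 hb2)
end

section
/- Let G be a red-blue graph such that G_blue contains no 5-cycle, let C = x_1 x_2 ⋯ x_n x_1 be a red n-cycle in G, and let x be a vertex of G not on C. If there exists j with j = 1, or 3 ≤ j ≤ n − 3, or j = n − 1, such that for some i the edges x x_i and x x_{i+j} are both red (indices taken modulo n), then G_red contains a cycle of length n + 1. -/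
open SimpleGraph


/-- build a walk along `g 0, g 1, ..., g k`. -/
lemma buildWalk {V : Type*} (G : SimpleGraph V) (g : ℕ → V) :
    ∀ k : ℕ, (∀ i, i < k → G.Adj (g i) (g (i+1))) →
    ∃ w : G.Walk (g 0) (g k), w.support = (List.range (k+1)).map g ∧ w.length = k := by
  intro k
  induction k with
  | zero => intro _; exact ⟨SimpleGraph.Walk.nil, by simp [List.range_succ], by simp⟩
  | succ k ih =>
    intro h
    obtain ⟨w, hs, hl⟩ := ih (fun i hi => h i (by omega))
    refine ⟨w.concat (h k (by omega)), ?_, by simp [hl]⟩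
    rw [SimpleGraph.Walk.support_concat, hs, List.range_succ]
    simp [List.range_succ]

/-- master lemma: an `(n+1)`-cycle through `v` and the `y`-vertices in order `F`. -/
lemma buildCycle {V : Type*} (G : SimpleGraph V) (n : ℕ) (hn : 3 ≤ n)
    (y : ZMod n → V) (hyinj : Function.Injective y)
    (v : V) (hv : v ∉ Set.range y)
    (F : ℕ → ℕ) (hFlt : ∀ p, p < n → F p < n)
    (hFinj : ∀ a, a < n → ∀ b, b < n → F a = F b → a = b)
    (hadj : ∀ p, p + 1 < n → G.Adj (y (F p)) (y (F (p+1))))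
    (h0 : G.Adj v (y (F 0))) (hl : G.Adj v (y (F (n-1)))) :
    hasCycle G (n+1) := by
  haveI : NeZero n := ⟨by omega⟩
  set g : ℕ → V := fun p => y (F p) with hg
  obtain ⟨w, hs, hlen⟩ := buildWalk G g (n-1) (fun i hi => hadj i (by omega))
  -- path from g 0 to v
  have hvne : ∀ a : ℕ, v ≠ y a := by
    intro a heq; exact hv ⟨_, heq.symm⟩
  have hyinj' : ∀ a b : ℕ, a < n → b < n → y (a : ZMod n) = y (b : ZMod n) → a = b := by
    intro a b ha hb heq
    have := hyinj heq
    have := congrArg ZMod.val this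
    rwa [ZMod.val_cast_of_lt ha, ZMod.val_cast_of_lt hb] at this
  have hginj : ∀ a b : ℕ, a < n → b < n → g a = g b → a = b := by
    intro a b ha hb heq
    exact hFinj a ha b hb (hyinj' _ _ (hFlt a ha) (hFlt b hb) heq)
  have hwsup : ∀ u ∈ w.support, ∃ a < n, u = g a := by
    intro u hu
    rw [hs] at hu
    simp only [List.mem_map, List.mem_range] at hu
    obtain ⟨a, ha, rfl⟩ := hu
    exact ⟨a, by omega, rfl⟩
  set p : G.Walk (g 0) v := w.concat (hl.symm) with hp
  have hpsup : p.support = w.support ++ [v] := by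
    rw [hp, SimpleGraph.Walk.support_concat]
  have hpath : p.IsPath := by
    rw [SimpleGraph.Walk.isPath_def, hpsup]
    rw [List.nodup_append]
    refine ⟨?_, List.nodup_singleton v, ?_⟩
    · rw [hs]
      rw [List.nodup_map_iff_inj_on List.nodup_range]
      intro a ha b hb heq
      simp only [List.mem_range] at ha hb
      exact hginj a b (by omega) (by omega) heq
    · intro u hu b hu' hub
      rw [← hub] at hu'
      simp only [List.mem_singleton] at hu'
      subst hu'
      obtain ⟨a, _, heq⟩ := hwsup u hu
      exact hvne _ heq
  have hedge : s(v, g 0) ∉ p.edges := by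
    rw [hp, SimpleGraph.Walk.edges_concat]
    intro hmem
    rw [List.concat_eq_append, List.mem_append] at hmem
    rcases hmem with hmem | hmem
    · obtain ⟨a, _, heq⟩ := hwsup v (SimpleGraph.Walk.fst_mem_support_of_mem_edges w hmem)
      exact hvne _ heq
    · rw [List.mem_singleton, Sym2.eq_iff] at hmem
      rcases hmem with ⟨h1, h2⟩ | ⟨h1, h2⟩
      · exact hvne _ h1
      · have := hginj 0 (n-1) (by omega) (by omega) h2
        omega
  refine ⟨v, SimpleGraph.Walk.cons h0 p, ?_, ?_⟩
  · rw [SimpleGraph.Walk.cons_isCycle_iff]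
    exact ⟨hpath, hedge⟩
  · simp only [SimpleGraph.Walk.length_cons, hp, SimpleGraph.Walk.length_concat, hlen]
    omega

section shapes
variable {V : Type*} (G : SimpleGraph V) (n : ℕ) (hn : 3 ≤ n)
  (y : ZMod n → V) (hyinj : Function.Injective y)
  (hcyc : ∀ s : ZMod n, G.Adj (y s) (y (s+1)))
  (v : V) (hv : v ∉ Set.range y)

include hn hyinj hcyc hv

omit hyinj hv in
lemma A1 : ∀ a : ℕ, G.Adj (y ((a : ℕ) : ZMod n)) (y ((a+1 : ℕ) : ZMod n)) := by
  intro a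
  have := hcyc ((a : ℕ) : ZMod n)
  rwa [show ((a+1:ℕ) : ZMod n) = ((a:ℕ) : ZMod n) + 1 by push_cast; ring]

omit hyinj hv in
lemma Awrap : G.Adj (y ((0:ℕ) : ZMod n)) (y ((n-1 : ℕ) : ZMod n)) := by
  have := A1 G n hn y hcyc (n-1)
  rw [show n-1+1 = n by omega] at this
  rw [show ((n:ℕ) : ZMod n) = ((0:ℕ):ZMod n) by simp] at this
  exact this.symm

/-- insert `v` between consecutive `y s`, `y (s+1)`. -/
lemma insertLemma (s : ZMod n) (h1 : G.Adj v (y s)) (h2 : G.Adj v (y (s+1))) :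
    hasCycle G (n+1) := by
  haveI : NeZero n := ⟨by omega⟩
  apply buildCycle G n hn (fun k => y (s+1+k)) ?_ v ?_ (fun p => p)
    (fun p hp => hp) (fun a ha b hb h => h) ?_ ?_ ?_
  · intro a b hab
    simpa using hyinj hab
  · rintro ⟨k, hk⟩
    exact hv ⟨s+1+k, hk⟩
  · intro p hp
    have := hcyc (s+1+(p:ZMod n))
    rwa [show (s+1+(p:ZMod n))+1 = s+1+((p+1 : ℕ) : ZMod n) by push_cast; ring] at this
  · simpa using h2
  · have hc : ((n-1 : ℕ) : ZMod n) = -1 := by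
      have : ((n-1:ℕ) : ZMod n) + 1 = ((n:ℕ) : ZMod n) := by
        rw [show ((n:ℕ):ZMod n) = ((n-1+1:ℕ):ZMod n) by congr 1; omega]; push_cast; ring
      simp only [ZMod.natCast_self] at this
      linear_combination this
    show G.Adj v (y (s+1+((n-1:ℕ) : ZMod n)))
    rw [hc, show s + 1 + -1 = s by ring]
    exact h1
end shapes

section shapes2
variable {V : Type*} (G : SimpleGraph V) (n : ℕ) (hn : 3 ≤ n)
  (y : ZMod n → V) (hyinj : Function.Injective y)
  (hcyc : ∀ s : ZMod n, G.Adj (y s) (y (s+1)))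
  (v : V) (hv : v ∉ Set.range y)
  (j : ℕ) (hj3 : 3 ≤ j) (hjn : j + 3 ≤ n)
  (h0 : G.Adj v (y ((0:ℕ) : ZMod n))) (hjv : G.Adj v (y ((j:ℕ) : ZMod n)))

include hn hyinj hcyc hv hj3 hjn h0 hjv

lemma S2Lemma (hchord : G.Adj (y ((1:ℕ):ZMod n)) (y ((j+1 : ℕ):ZMod n))) :
    hasCycle G (n+1) := by
  set F : ℕ → ℕ := fun p => if p = 0 then 0 else if p ≤ n-j-1 then n-p else p+j+1-n with hF
  have hA := A1 G n hn y hcyc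
  apply buildCycle G n hn y hyinj v hv F
  · intro p hp; simp only [hF]; split_ifs <;> first | exact ‹False›.elim | omega
  · intro a ha b hb h; simp only [hF] at h; split_ifs at h <;> omega
  · intro p hp
    obtain h | h | h | h : p = 0 ∨ (1 ≤ p ∧ p + 1 ≤ n-j-1) ∨ p = n-j-1 ∨ (n-j ≤ p ∧ p ≤ n-2) := by omega
    · rw [show F p = 0 by simp only [hF]; split_ifs <;> first | exact ‹False›.elim | omega,
          show F (p+1) = n-1 by simp only [hF]; split_ifs <;> first | exact ‹False›.elim | omega]
      exact Awrap G n hn y hcyc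
    · rw [show F p = F (p+1) + 1 by simp only [hF]; split_ifs <;> first | exact ‹False›.elim | omega]
      exact (hA (F (p+1))).symm
    · rw [show F p = j+1 by simp only [hF]; split_ifs <;> first | exact ‹False›.elim | omega,
          show F (p+1) = 1 by simp only [hF]; split_ifs <;> first | exact ‹False›.elim | omega]
      exact hchord.symm
    · rw [show F (p+1) = F p + 1 by simp only [hF]; split_ifs <;> first | exact ‹False›.elim | omega]
      exact hA (F p)
  · rw [show F 0 = 0 by simp only [hF]; split_ifs <;> first | exact ‹False›.elim | omega]; exact h0
  · rw [show F (n-1) = j by simp only [hF]; split_ifs <;> first | exact ‹False›.elim | omega]; exact hjv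

lemma sh02 (hab : G.Adj (y ((1:ℕ):ZMod n)) (y ((n-1:ℕ):ZMod n)))
    (had : G.Adj (y ((1:ℕ):ZMod n)) (y ((j-1:ℕ):ZMod n)))
    (h02 : G.Adj (y ((0:ℕ):ZMod n)) (y ((2:ℕ):ZMod n))) :
    hasCycle G (n+1) := by
  set F : ℕ → ℕ := fun p => if p = 0 then 0 else if p ≤ j-2 then p+1 else if p = j-1 then 1 else n+j-1-p with hF
  have hA := A1 G n hn y hcyc
  apply buildCycle G n hn y hyinj v hv F
  · intro p hp; simp only [hF]; split_ifs <;> first | exact ‹False›.elim | omega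
  · intro a ha b hb h; simp only [hF] at h; split_ifs at h <;> omega
  · intro p hp
    obtain h | h | h | h | h : p = 0 ∨ (1 ≤ p ∧ p + 1 ≤ j-2) ∨ p = j-2 ∨ p = j-1 ∨ (j ≤ p ∧ p ≤ n-2) := by omega
    · rw [show F p = 0 by simp only [hF]; split_ifs <;> first | exact ‹False›.elim | omega,
          show F (p+1) = 2 by simp only [hF]; split_ifs <;> first | exact ‹False›.elim | omega]
      exact h02
    · rw [show F (p+1) = F p + 1 by simp only [hF]; split_ifs <;> first | exact ‹False›.elim | omega]
      exact hA (F p)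
    · rw [show F p = j-1 by simp only [hF]; split_ifs <;> first | exact ‹False›.elim | omega,
          show F (p+1) = 1 by simp only [hF]; split_ifs <;> first | exact ‹False›.elim | omega]
      exact had.symm
    · rw [show F p = 1 by simp only [hF]; split_ifs <;> first | exact ‹False›.elim | omega,
          show F (p+1) = n-1 by simp only [hF]; split_ifs <;> first | exact ‹False›.elim | omega]
      exact hab
    · rw [show F p = F (p+1) + 1 by simp only [hF]; split_ifs <;> first | exact ‹False›.elim | omega]
      exact (hA (F (p+1))).symm
  · rw [show F 0 = 0 by simp only [hF]; split_ifs <;> first | exact ‹False›.elim | omega]; exact h0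
  · rw [show F (n-1) = j by simp only [hF]; split_ifs <;> first | exact ‹False›.elim | omega]; exact hjv

lemma sh2j (hab : G.Adj (y ((1:ℕ):ZMod n)) (y ((n-1:ℕ):ZMod n)))
    (hcd : G.Adj (y ((j-1:ℕ):ZMod n)) (y ((j+1:ℕ):ZMod n)))
    (h2j : G.Adj (y ((2:ℕ):ZMod n)) (y ((j:ℕ):ZMod n))) :
    hasCycle G (n+1) := by
  set F : ℕ → ℕ := fun p => if p ≤ 1 then p else if p ≤ n-j then n+1-p else if p ≤ n-2 then n-p else j with hF
  have hA := A1 G n hn y hcyc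
  apply buildCycle G n hn y hyinj v hv F
  · intro p hp; simp only [hF]; split_ifs <;> first | exact ‹False›.elim | omega
  · intro a ha b hb h; simp only [hF] at h; split_ifs at h <;> omega
  · intro p hp
    obtain h | h | h | h | h | h : p = 0 ∨ p = 1 ∨ (2 ≤ p ∧ p + 1 ≤ n-j) ∨ p = n-j ∨ (n-j+1 ≤ p ∧ p ≤ n-3) ∨ p = n-2 := by omega
    · rw [show F (p+1) = F p + 1 by simp only [hF]; split_ifs <;> first | exact ‹False›.elim | omega]
      exact hA (F p)
    · rw [show F p = 1 by simp only [hF]; split_ifs <;> first | exact ‹False›.elim | omega,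
          show F (p+1) = n-1 by simp only [hF]; split_ifs <;> first | exact ‹False›.elim | omega]
      exact hab
    · rw [show F p = F (p+1) + 1 by simp only [hF]; split_ifs <;> first | exact ‹False›.elim | omega]
      exact (hA (F (p+1))).symm
    · rw [show F p = j+1 by simp only [hF]; split_ifs <;> first | exact ‹False›.elim | omega,
          show F (p+1) = j-1 by simp only [hF]; split_ifs <;> first | exact ‹False›.elim | omega]
      exact hcd.symm
    · rw [show F p = F (p+1) + 1 by simp only [hF]; split_ifs <;> first | exact ‹False›.elim | omega]
      exact (hA (F (p+1))).symm
    · rw [show F p = 2 by simp only [hF]; split_ifs <;> first | exact ‹False›.elim | omega,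
          show F (p+1) = j by simp only [hF]; split_ifs <;> first | exact ‹False›.elim | omega]
      exact h2j
  · rw [show F 0 = 0 by simp only [hF]; split_ifs <;> first | exact ‹False›.elim | omega]; exact h0
  · rw [show F (n-1) = j by simp only [hF]; split_ifs <;> first | exact ‹False›.elim | omega]; exact hjv

lemma sh1j (hcd : G.Adj (y ((j-1:ℕ):ZMod n)) (y ((j+1:ℕ):ZMod n)))
    (h1j : G.Adj (y ((1:ℕ):ZMod n)) (y ((j:ℕ):ZMod n))) :
    hasCycle G (n+1) := by
  set F : ℕ → ℕ := fun p => if p = 0 then 0 else if p ≤ n-j-1 then n-p else if p ≤ n-2 then n-1-p else j with hF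
  have hA := A1 G n hn y hcyc
  apply buildCycle G n hn y hyinj v hv F
  · intro p hp; simp only [hF]; split_ifs <;> first | exact ‹False›.elim | omega
  · intro a ha b hb h; simp only [hF] at h; split_ifs at h <;> omega
  · intro p hp
    obtain h | h | h | h | h : p = 0 ∨ (1 ≤ p ∧ p + 1 ≤ n-j-1) ∨ p = n-j-1 ∨ (n-j ≤ p ∧ p ≤ n-3) ∨ p = n-2 := by omega
    · rw [show F p = 0 by simp only [hF]; split_ifs <;> first | exact ‹False›.elim | omega,
          show F (p+1) = n-1 by simp only [hF]; split_ifs <;> first | exact ‹False›.elim | omega]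
      exact Awrap G n hn y hcyc
    · rw [show F p = F (p+1) + 1 by simp only [hF]; split_ifs <;> first | exact ‹False›.elim | omega]
      exact (hA (F (p+1))).symm
    · rw [show F p = j+1 by simp only [hF]; split_ifs <;> first | exact ‹False›.elim | omega,
          show F (p+1) = j-1 by simp only [hF]; split_ifs <;> first | exact ‹False›.elim | omega]
      exact hcd.symm
    · rw [show F p = F (p+1) + 1 by simp only [hF]; split_ifs <;> first | exact ‹False›.elim | omega]
      exact (hA (F (p+1))).symm
    · rw [show F p = 1 by simp only [hF]; split_ifs <;> first | exact ‹False›.elim | omega,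
          show F (p+1) = j by simp only [hF]; split_ifs <;> first | exact ‹False›.elim | omega]
      exact h1j
  · rw [show F 0 = 0 by simp only [hF]; split_ifs <;> first | exact ‹False›.elim | omega]; exact h0
  · rw [show F (n-1) = j by simp only [hF]; split_ifs <;> first | exact ‹False›.elim | omega]; exact hjv

lemma sh0J (hab : G.Adj (y ((1:ℕ):ZMod n)) (y ((n-1:ℕ):ZMod n)))
    (h0J : G.Adj (y ((0:ℕ):ZMod n)) (y ((j+1:ℕ):ZMod n))) :
    hasCycle G (n+1) := by
  set F : ℕ → ℕ := fun p => if p = 0 then 0 else if p ≤ n-j-1 then j+p else p+j+1-n with hF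
  have hA := A1 G n hn y hcyc
  apply buildCycle G n hn y hyinj v hv F
  · intro p hp; simp only [hF]; split_ifs <;> first | exact ‹False›.elim | omega
  · intro a ha b hb h; simp only [hF] at h; split_ifs at h <;> omega
  · intro p hp
    obtain h | h | h | h : p = 0 ∨ (1 ≤ p ∧ p + 1 ≤ n-j-1) ∨ p = n-j-1 ∨ (n-j ≤ p ∧ p ≤ n-2) := by omega
    · rw [show F p = 0 by simp only [hF]; split_ifs <;> first | exact ‹False›.elim | omega,
          show F (p+1) = j+1 by simp only [hF]; split_ifs <;> first | exact ‹False›.elim | omega]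
      exact h0J
    · rw [show F (p+1) = F p + 1 by simp only [hF]; split_ifs <;> first | exact ‹False›.elim | omega]
      exact hA (F p)
    · rw [show F p = n-1 by simp only [hF]; split_ifs <;> first | exact ‹False›.elim | omega,
          show F (p+1) = 1 by simp only [hF]; split_ifs <;> first | exact ‹False›.elim | omega]
      exact hab.symm
    · rw [show F (p+1) = F p + 1 by simp only [hF]; split_ifs <;> first | exact ‹False›.elim | omega]
      exact hA (F p)
  · rw [show F 0 = 0 by simp only [hF]; split_ifs <;> first | exact ‹False›.elim | omega]; exact h0
  · rw [show F (n-1) = j by simp only [hF]; split_ifs <;> first | exact ‹False›.elim | omega]; exact hjv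

end shapes2

lemma c5lemma {V : Type*} (H : SimpleGraph V) (a b c d e : V)
    (h1 : H.Adj a b) (h2 : H.Adj b c) (h3 : H.Adj c d) (h4 : H.Adj d e) (h5 : H.Adj e a)
    (n1 : a ≠ c) (n2 : a ≠ d) (n3 : b ≠ d) (n4 : b ≠ e) (n5 : c ≠ e) : hasCycle H 5 := by
  refine ⟨a, .cons h1 (.cons h2 (.cons h3 (.cons h4 (.cons h5 .nil)))), ?_, rfl⟩
  rw [SimpleGraph.Walk.cons_isCycle_iff]
  constructor
  · rw [SimpleGraph.Walk.isPath_def]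
    simp [h1.ne', h2.ne, h3.ne, h4.ne, h5.ne, h5.ne', n3, n4, n5, n2.symm, n1.symm]
  · simp only [SimpleGraph.Walk.edges_cons, SimpleGraph.Walk.edges_nil, List.mem_cons,
      List.mem_singleton, Sym2.eq_iff, List.not_mem_nil, or_false]
    push_neg
    refine ⟨⟨?_,?_⟩,⟨?_,?_⟩,⟨?_,?_⟩,⟨?_,?_⟩⟩ <;> intro hh <;> simp_all <;> tauto



/-- Lemma 3.13: suppose the blue subgraph `Gᶜ` has no 5-cycle,
`x_1 x_2 ⋯ x_n x_1` is a red `n`-cycle, and `v` is a vertex off the cycle.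
If for some `j ∈ {1} ∪ [3, n−3] ∪ {n−1}` and some `i` both edges `v x_i` and
`v x_{i+j}` are red (indices mod `n`), then `G` contains a red `(n+1)`-cycle. -/
theorem stmt_5 {V : Type*} [Fintype V] (G : SimpleGraph V)
    (h5 : ¬ hasCycle Gᶜ 5)
    (n : ℕ) (hn : 3 ≤ n) (x : ZMod n → V) (hinj : Function.Injective x)
    (hcyc : ∀ i : ZMod n, G.Adj (x i) (x (i + 1)))
    (v : V) (hv : v ∉ Set.range x)
    (hj : ∃ j : ℕ, (j = 1 ∨ (3 ≤ j ∧ j ≤ n - 3) ∨ j = n - 1) ∧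
      ∃ i : ZMod n, G.Adj v (x i) ∧ G.Adj v (x (i + (j : ZMod n)))) :
    hasCycle G (n + 1) := by
  obtain ⟨j, hjcase, i, hvi, hvij⟩ := hj
  haveI : NeZero n := ⟨by omega⟩
  set y : ZMod n → V := fun k => x (i + k) with hy
  have hyinj : Function.Injective y := fun a b h => add_left_cancel (hinj h)
  have hycyc : ∀ s : ZMod n, G.Adj (y s) (y (s+1)) := by
    intro s
    have := hcyc (i + s)
    rwa [show i + s + 1 = i + (s+1) by ring] at this
  have hyv : v ∉ Set.range y := by
    rintro ⟨k, hk⟩; exact hv ⟨i+k, hk⟩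
  have hv0 : G.Adj v (y ((0:ℕ) : ZMod n)) := by
    simp only [hy]; simpa using hvi
  have hvj : G.Adj v (y ((j:ℕ) : ZMod n)) := by
    simp only [hy]; exact hvij
  have ewrap : ((n-1:ℕ) : ZMod n) + 1 = ((0:ℕ) : ZMod n) := by
    rw [show ((n-1:ℕ):ZMod n)+1 = ((n-1+1:ℕ):ZMod n) by push_cast; ring,
      show n-1+1 = n by omega]
    simp
  have yne : ∀ a b : ℕ, a < n → b < n → a ≠ b →
      y ((a:ℕ):ZMod n) ≠ y ((b:ℕ):ZMod n) := by
    intro a b ha hb hne heq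
    have h2 := hyinj heq
    have h3 := congrArg ZMod.val h2
    rw [ZMod.val_cast_of_lt ha, ZMod.val_cast_of_lt hb] at h3
    exact hne h3
  have vy : ∀ a : ℕ, v ≠ y ((a:ℕ):ZMod n) := fun a heq => hyv ⟨_, heq.symm⟩
  rcases hjcase with rfl | ⟨hj3, hjle⟩ | rfl
  · -- j = 1
    refine insertLemma G n hn y hyinj hycyc v hyv 0 (by simpa using hv0) ?_
    simpa using hvj
  · -- 3 ≤ j ≤ n - 3
    have hjn : j + 3 ≤ n := by omega
    have hcast1 : ((j+1:ℕ) : ZMod n) = ((j:ℕ):ZMod n) + 1 := by push_cast; ring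
    have hcastm : ((j-1:ℕ) : ZMod n) + 1 = ((j:ℕ):ZMod n) := by
      rw [← Nat.cast_add_one]; congr 1; omega
    by_cases Hva : G.Adj v (y ((1:ℕ):ZMod n))
    · refine insertLemma G n hn y hyinj hycyc v hyv 0 (by simpa using hv0) ?_
      simpa using Hva
    by_cases Hvb : G.Adj v (y ((n-1:ℕ):ZMod n))
    · refine insertLemma G n hn y hyinj hycyc v hyv ((n-1:ℕ):ZMod n) Hvb ?_
      rw [ewrap]; exact hv0
    by_cases Hvc : G.Adj v (y ((j+1:ℕ):ZMod n))
    · refine insertLemma G n hn y hyinj hycyc v hyv ((j:ℕ):ZMod n) hvj ?_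
      rw [← hcast1]; exact Hvc
    by_cases Hvd : G.Adj v (y ((j-1:ℕ):ZMod n))
    · refine insertLemma G n hn y hyinj hycyc v hyv ((j-1:ℕ):ZMod n) Hvd ?_
      rw [hcastm]; exact hvj
    by_cases Hac : G.Adj (y ((1:ℕ):ZMod n)) (y ((j+1:ℕ):ZMod n))
    · exact S2Lemma G n hn y hyinj hycyc v hyv j hj3 hjn hv0 hvj Hac
    by_cases Hbd : G.Adj (y ((j-1:ℕ):ZMod n)) (y ((n-1:ℕ):ZMod n))
    · -- reflected cycle y' k = y (j - k)
      set y' : ZMod n → V := fun k => y (((j:ℕ):ZMod n) - k) with hy'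
      have hy'inj : Function.Injective y' := by
        intro a b h
        have h2 : ((j:ℕ):ZMod n) - a = ((j:ℕ):ZMod n) - b := hyinj h
        linear_combination -h2
      have hy'cyc : ∀ s : ZMod n, G.Adj (y' s) (y' (s+1)) := by
        intro s
        have := (hycyc (((j:ℕ):ZMod n) - s - 1)).symm
        rw [show ((j:ℕ):ZMod n) - s - 1 + 1 = ((j:ℕ):ZMod n) - s by ring] at this
        simp only [hy']
        rwa [show ((j:ℕ):ZMod n) - (s+1) = ((j:ℕ):ZMod n) - s - 1 by ring]
      have hy'v : v ∉ Set.range y' := by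
        rintro ⟨k, hk⟩; exact hyv ⟨_, hk⟩
      have h0' : G.Adj v (y' ((0:ℕ):ZMod n)) := by
        simp only [hy']; simpa using hvj
      have hj' : G.Adj v (y' ((j:ℕ):ZMod n)) := by
        simp only [hy']; simpa using hv0
      have hchord' : G.Adj (y' ((1:ℕ):ZMod n)) (y' ((j+1:ℕ):ZMod n)) := by
        simp only [hy']
        have e1 : ((j:ℕ):ZMod n) - ((1:ℕ):ZMod n) = ((j-1:ℕ):ZMod n) := by
          push_cast [Nat.cast_sub (by omega : 1 ≤ j)]; ring
        have e2 : ((j:ℕ):ZMod n) - ((j+1:ℕ):ZMod n) = ((n-1:ℕ):ZMod n) := by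
          rw [hcast1]
          have : ((n-1:ℕ):ZMod n) = -1 := by
            have h9 := ewrap; simp only [Nat.cast_zero] at h9; linear_combination h9
          rw [this]; ring
        rw [e1, e2]; exact Hbd
      exact S2Lemma G n hn y' hy'inj hy'cyc v hy'v j hj3 hjn h0' hj' hchord'
    by_cases Hab : G.Adj (y ((1:ℕ):ZMod n)) (y ((n-1:ℕ):ZMod n))
    case neg =>
      refine (h5 (c5lemma Gᶜ v (y ((j+1:ℕ):ZMod n)) (y ((1:ℕ):ZMod n))
        (y ((n-1:ℕ):ZMod n)) (y ((j-1:ℕ):ZMod n)) ?_ ?_ ?_ ?_ ?_ ?_ ?_ ?_ ?_ ?_)).elim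
      · exact (SimpleGraph.compl_adj (G := G) _ _).mpr ⟨vy _, Hvc⟩
      · exact (SimpleGraph.compl_adj (G := G) _ _).mpr ⟨yne _ _ (by omega) (by omega) (by omega), fun h => Hac h.symm⟩
      · exact (SimpleGraph.compl_adj (G := G) _ _).mpr ⟨yne _ _ (by omega) (by omega) (by omega), Hab⟩
      · exact (SimpleGraph.compl_adj (G := G) _ _).mpr ⟨yne _ _ (by omega) (by omega) (by omega), fun h => Hbd h.symm⟩
      · exact (SimpleGraph.compl_adj (G := G) _ _).mpr ⟨(vy _).symm, fun h => Hvd h.symm⟩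
      · exact vy _
      · exact vy _
      · exact yne _ _ (by omega) (by omega) (by omega)
      · exact yne _ _ (by omega) (by omega) (by omega)
      · exact yne _ _ (by omega) (by omega) (by omega)
    by_cases Had : G.Adj (y ((1:ℕ):ZMod n)) (y ((j-1:ℕ):ZMod n))
    case neg =>
      refine (h5 (c5lemma Gᶜ v (y ((j+1:ℕ):ZMod n)) (y ((1:ℕ):ZMod n))
        (y ((j-1:ℕ):ZMod n)) (y ((n-1:ℕ):ZMod n)) ?_ ?_ ?_ ?_ ?_ ?_ ?_ ?_ ?_ ?_)).elim
      · exact (SimpleGraph.compl_adj (G := G) _ _).mpr ⟨vy _, Hvc⟩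
      · exact (SimpleGraph.compl_adj (G := G) _ _).mpr ⟨yne _ _ (by omega) (by omega) (by omega), fun h => Hac h.symm⟩
      · exact (SimpleGraph.compl_adj (G := G) _ _).mpr ⟨yne _ _ (by omega) (by omega) (by omega), Had⟩
      · exact (SimpleGraph.compl_adj (G := G) _ _).mpr ⟨yne _ _ (by omega) (by omega) (by omega), Hbd⟩
      · exact (SimpleGraph.compl_adj (G := G) _ _).mpr ⟨(vy _).symm, fun h => Hvb h.symm⟩
      · exact vy _
      · exact vy _
      · exact yne _ _ (by omega) (by omega) (by omega)
      · exact yne _ _ (by omega) (by omega) (by omega)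
      · exact yne _ _ (by omega) (by omega) (by omega)
    by_cases Hcd : G.Adj (y ((j-1:ℕ):ZMod n)) (y ((j+1:ℕ):ZMod n))
    case neg =>
      refine (h5 (c5lemma Gᶜ v (y ((1:ℕ):ZMod n)) (y ((j+1:ℕ):ZMod n))
        (y ((j-1:ℕ):ZMod n)) (y ((n-1:ℕ):ZMod n)) ?_ ?_ ?_ ?_ ?_ ?_ ?_ ?_ ?_ ?_)).elim
      · exact (SimpleGraph.compl_adj (G := G) _ _).mpr ⟨vy _, Hva⟩
      · exact (SimpleGraph.compl_adj (G := G) _ _).mpr ⟨yne _ _ (by omega) (by omega) (by omega), Hac⟩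
      · exact (SimpleGraph.compl_adj (G := G) _ _).mpr ⟨yne _ _ (by omega) (by omega) (by omega), fun h => Hcd h.symm⟩
      · exact (SimpleGraph.compl_adj (G := G) _ _).mpr ⟨yne _ _ (by omega) (by omega) (by omega), Hbd⟩
      · exact (SimpleGraph.compl_adj (G := G) _ _).mpr ⟨(vy _).symm, fun h => Hvb h.symm⟩
      · exact vy _
      · exact vy _
      · exact yne _ _ (by omega) (by omega) (by omega)
      · exact yne _ _ (by omega) (by omega) (by omega)
      · exact yne _ _ (by omega) (by omega) (by omega)
    by_cases H02 : G.Adj (y ((0:ℕ):ZMod n)) (y ((2:ℕ):ZMod n))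
    · exact sh02 G n hn y hyinj hycyc v hyv j hj3 hjn hv0 hvj Hab Had H02
    by_cases H2j : G.Adj (y ((2:ℕ):ZMod n)) (y ((j:ℕ):ZMod n))
    · exact sh2j G n hn y hyinj hycyc v hyv j hj3 hjn hv0 hvj Hab Hcd H2j
    by_cases H1j : G.Adj (y ((1:ℕ):ZMod n)) (y ((j:ℕ):ZMod n))
    · exact sh1j G n hn y hyinj hycyc v hyv j hj3 hjn hv0 hvj Hcd H1j
    by_cases H0J : G.Adj (y ((0:ℕ):ZMod n)) (y ((j+1:ℕ):ZMod n))
    · exact sh0J G n hn y hyinj hycyc v hyv j hj3 hjn hv0 hvj Hab H0J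
    refine (h5 (c5lemma Gᶜ (y ((0:ℕ):ZMod n)) (y ((2:ℕ):ZMod n)) (y ((j:ℕ):ZMod n))
      (y ((1:ℕ):ZMod n)) (y ((j+1:ℕ):ZMod n)) ?_ ?_ ?_ ?_ ?_ ?_ ?_ ?_ ?_ ?_)).elim
    · exact (SimpleGraph.compl_adj (G := G) _ _).mpr ⟨yne _ _ (by omega) (by omega) (by omega), H02⟩
    · exact (SimpleGraph.compl_adj (G := G) _ _).mpr ⟨yne _ _ (by omega) (by omega) (by omega), H2j⟩
    · exact (SimpleGraph.compl_adj (G := G) _ _).mpr ⟨yne _ _ (by omega) (by omega) (by omega), fun h => H1j h.symm⟩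
    · exact (SimpleGraph.compl_adj (G := G) _ _).mpr ⟨yne _ _ (by omega) (by omega) (by omega), Hac⟩
    · exact (SimpleGraph.compl_adj (G := G) _ _).mpr ⟨yne _ _ (by omega) (by omega) (by omega), fun h => H0J h.symm⟩
    · exact yne _ _ (by omega) (by omega) (by omega)
    · exact yne _ _ (by omega) (by omega) (by omega)
    · exact yne _ _ (by omega) (by omega) (by omega)
    · exact yne _ _ (by omega) (by omega) (by omega)
    · exact yne _ _ (by omega) (by omega) (by omega)
  · -- j = n - 1
    refine insertLemma G n hn y hyinj hycyc v hyv ((n-1:ℕ):ZMod n) hvj ?_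
    rw [ewrap]; exact hv0
end
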